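/- arXiv:2008.01708 — 6 statements merged into one kernel-verified Lean document; each statement's English description precedes it below -/
import Mathlib

section
/- Let Ω ⊆ ℝⁿ be open, let u : Ω → ℝ be C² with Δu ≥ 1 on Ω, and suppose u ≤ c on Ω for some constant c. Let Ω_R denote the set of points x ∈ Ω with closed ball of radius R about x contained in Ω. Then u(x) ≤ c − R²/(2n+4) for every x ∈ Ω_R. -/
open MeasureTheory Set Metric Filter Topology


lemma second_deriv_nonpos_of_isLocalMax {f : ℝ → ℝ}
    (hf : ∀ᶠ t in 𝓝 (0:ℝ), DifferentiableAt ℝ f t)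
    (hf' : DifferentiableAt ℝ (deriv f) 0)
    (hmax : IsLocalMax f 0) :
    deriv (deriv f) 0 ≤ 0 := by
  by_contra hpos
  push_neg at hpos
  have h0 : deriv f 0 = 0 := hmax.deriv_eq_zero
  have hslope : Tendsto (slope (deriv f) 0) (𝓝[≠] 0) (𝓝 (deriv (deriv f) 0)) :=
    hasDerivAt_iff_tendsto_slope.1 hf'.hasDerivAt
  have hev1 : ∀ᶠ t in 𝓝[≠] (0:ℝ), 0 < slope (deriv f) 0 t :=
    hslope.eventually (eventually_gt_nhds hpos)
  have hev2 : ∀ᶠ t in 𝓝[>] (0:ℝ), 0 < deriv f t := by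
    filter_upwards [hev1.filter_mono (nhdsWithin_mono _ fun t ht => ne_of_gt ht),
      self_mem_nhdsWithin] with t ht ht0
    have : slope (deriv f) 0 t = deriv f t / t := by
      rw [slope_def_field, h0]; ring_nf
    rw [this] at ht
    exact (div_pos_iff.1 ht).resolve_right (fun h => absurd ht0 (not_lt.2 h.2.le)) |>.1
  obtain ⟨δ₂, hδ₂, hsub2⟩ := mem_nhdsGT_iff_exists_Ioo_subset.1 hev2
  obtain ⟨δ₁, hδ₁, hsub1⟩ := Metric.eventually_nhds_iff.1 (hf.and hmax)
  set δ : ℝ := min δ₁ δ₂ / 2 with hδdef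
  have hmin : 0 < min δ₁ δ₂ := lt_min hδ₁ hδ₂
  have hδpos : 0 < δ := by rw [hδdef]; linarith
  have hδ1 : δ < δ₁ := by
    have h' : min δ₁ δ₂ ≤ δ₁ := min_le_left _ _
    rw [hδdef]; linarith
  have hδ2 : δ < δ₂ := by
    have h' : min δ₁ δ₂ ≤ δ₂ := min_le_right _ _
    rw [hδdef]; linarith
  have hmono : StrictMonoOn f (Icc 0 δ) := by
    apply strictMonoOn_of_deriv_pos (convex_Icc _ _)
    · intro t ht
      have : dist t 0 < δ₁ := by
        rw [Real.dist_eq, sub_zero, abs_of_nonneg ht.1]; linarith [ht.2]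
      exact ((hsub1 this).1).continuousAt.continuousWithinAt
    · intro t ht
      rw [interior_Icc] at ht
      exact hsub2 ⟨ht.1, lt_trans ht.2 hδ2⟩
  have hlt : f 0 < f δ := hmono (left_mem_Icc.2 hδpos.le) (right_mem_Icc.2 hδpos.le) hδpos
  have hle : f δ ≤ f 0 := by
    have : dist δ 0 < δ₁ := by rw [Real.dist_eq, sub_zero, abs_of_pos hδpos]; exact hδ1
    exact (hsub1 this).2
  linarith



/-- The Laplacian of `u : ℝⁿ → ℝ`, as the sum of the second partial derivatives
in the coordinate directions. -/
noncomputable def lap {n : ℕ} (u : EuclideanSpace ℝ (Fin n) → ℝ)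
    (x : EuclideanSpace ℝ (Fin n)) : ℝ :=
  ∑ i, fderiv ℝ (fun y => fderiv ℝ u y (EuclideanSpace.single i 1)) x
    (EuclideanSpace.single i 1)

/-- if `u` is `C²` on an open `Ω` with `Δu ≥ 1` and `u ≤ c` on `Ω`, then
`u(x) ≤ c − R²/(2n+4)` for every `x ∈ Ω_R`, the set of points whose closed `R`-ball
lies in `Ω`. -/
theorem stmt6 {n : ℕ} (Ω : Set (EuclideanSpace ℝ (Fin n))) (hΩ : IsOpen Ω)
    (u : EuclideanSpace ℝ (Fin n) → ℝ) (hu : ContDiffOn ℝ 2 u Ω)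
    (hΔ : ∀ y ∈ Ω, 1 ≤ lap u y)
    (c : ℝ) (hc : ∀ y ∈ Ω, u y ≤ c)
    (R : ℝ) (hR : 0 < R) :
    ∀ x, closedBall x R ⊆ Ω → u x ≤ c - R ^ 2 / (2 * n + 4) := by
  intro x hsub
  set m : ℝ := 2 * n + 4 with hm_def
  have hm : (0:ℝ) < m := by positivity
  set w : EuclideanSpace ℝ (Fin n) → ℝ :=
    fun y => u y + (R ^ 2 - ‖y - x‖ ^ 2) / m with hw_def
  have hwc : ContinuousOn w (closedBall x R) := by
    apply ContinuousOn.add ((hu.continuousOn).mono hsub)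
    fun_prop
  obtain ⟨y₀, hy₀mem, hy₀max⟩ := (isCompact_closedBall x R).exists_isMaxOn
    ⟨x, mem_closedBall_self hR.le⟩ hwc
  have hy₀Ω : y₀ ∈ Ω := hsub hy₀mem
  have hwx : w x = u x + R ^ 2 / m := by simp [hw_def]
  rcases lt_or_eq_of_le (mem_closedBall.1 hy₀mem) with hd | hd
  · -- interior maximum: contradiction
    exfalso
    have hloc : IsLocalMax w y₀ := hy₀max.isLocalMax
      (Filter.mem_of_superset (isOpen_ball.mem_nhds (mem_ball.2 hd)) ball_subset_closedBall)
    -- differentiability facts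
    have hudiff : ∀ y ∈ Ω, DifferentiableAt ℝ u y := fun y hy =>
      (hu.contDiffAt (hΩ.mem_nhds hy)).differentiableAt (by norm_num)
    have hfd : DifferentiableAt ℝ (fderiv ℝ u) y₀ :=
      ((hu.fderiv_of_isOpen hΩ (m := 1) (by norm_num)).differentiableOn one_ne_zero).differentiableAt
        (hΩ.mem_nhds hy₀Ω)
    have key : ∀ i : Fin n,
        fderiv ℝ (fun y => fderiv ℝ u y (EuclideanSpace.single i 1)) y₀
          (EuclideanSpace.single i 1) ≤ 2 / m := by
      intro i
      set v : EuclideanSpace ℝ (Fin n) := EuclideanSpace.single i (1:ℝ) with hv_def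
      have hv : ‖v‖ = 1 := by simp [hv_def]
      set L : ℝ → EuclideanSpace ℝ (Fin n) := fun t => y₀ + t • v with hL_def
      have hL0 : L 0 = y₀ := by simp [hL_def]
      have hLd : ∀ t, HasDerivAt L v t := fun t => by
        exact (((hasDerivAt_id t).smul_const v).const_add y₀).congr_deriv (by simp)
      have hLcont : Continuous L := by fun_prop
      have hLten : Tendsto L (𝓝 0) (𝓝 y₀) := by
        rw [← hL0]; exact hLcont.continuousAt
      have hLΩ : ∀ᶠ t in 𝓝 (0:ℝ), L t ∈ Ω := hLten.eventually (hΩ.eventually_mem hy₀Ω)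
      set A : ℝ := inner ℝ (y₀ - x) v with hA_def
      set K : ℝ := R ^ 2 - ‖y₀ - x‖ ^ 2 with hK_def
      set g : ℝ → ℝ := fun t => w (L t) with hg_def
      set q : ℝ → ℝ := fun t => (K - 2 * A * t - t ^ 2) / m with hq_def
      have hgq : g = fun t => u (L t) + q t := by
        funext t
        have h1 : L t - x = (y₀ - x) + t • v := by
          show y₀ + t • v - x = (y₀ - x) + t • v; abel
        have h2 : ‖L t - x‖ ^ 2 = ‖y₀ - x‖ ^ 2 + 2 * A * t + t ^ 2 := by
          rw [h1, norm_add_sq_real, real_inner_smul_right, norm_smul]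
          simp [hv, Real.norm_eq_abs, sq_abs, hA_def]
          ring
        simp only [hg_def, hw_def, hq_def, h2, hK_def]
        ring_nf
      have hq' : ∀ t, HasDerivAt q ((-(2 * A) - 2 * t) / m) t := by
        intro t
        apply HasDerivAt.div_const
        have : HasDerivAt (fun s : ℝ => K - 2 * A * s - s ^ 2) (-(2 * A) - 2 * t) t := by
          exact ((((hasDerivAt_id t).const_mul (2 * A)).const_sub K).sub
            (hasDerivAt_pow 2 t)).congr_deriv (by simp)
        exact this
      have hgd : ∀ᶠ t in 𝓝 (0:ℝ),
          HasDerivAt g (fderiv ℝ u (L t) v + (-(2 * A) - 2 * t) / m) t := by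
        filter_upwards [hLΩ] with t ht
        rw [hgq]
        exact (((hudiff _ ht).hasFDerivAt).comp_hasDerivAt t (hLd t)).add (hq' t)
      have hderiv_g : ∀ᶠ t in 𝓝 (0:ℝ),
          deriv g t = fderiv ℝ u (L t) v + (-(2 * A) - 2 * t) / m := by
        filter_upwards [hgd] with t ht using ht.deriv
      -- second derivative of RHS at 0
      have hh : DifferentiableAt ℝ (fun y => fderiv ℝ u y v) y₀ :=
        hfd.clm_apply (differentiableAt_const v)
      have hcomp : HasDerivAt (fun t => fderiv ℝ u (L t) v)
          (fderiv ℝ (fun y => fderiv ℝ u y v) y₀ v) 0 := by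
        exact (hh.hasFDerivAt).comp_hasDerivAt_of_eq 0 (hLd 0) hL0.symm
      have hlin : HasDerivAt (fun t : ℝ => (-(2 * A) - 2 * t) / m) (-2 / m) 0 := by
        apply HasDerivAt.div_const
        simpa using ((hasDerivAt_id (0:ℝ)).const_mul 2).const_sub (-(2 * A))
      have hrhs : HasDerivAt (fun t => fderiv ℝ u (L t) v + (-(2 * A) - 2 * t) / m)
          (fderiv ℝ (fun y => fderiv ℝ u y v) y₀ v + (-2 / m)) 0 := hcomp.add hlin
      have hderiv2 : deriv (deriv g) 0
          = fderiv ℝ (fun y => fderiv ℝ u y v) y₀ v + (-2 / m) := by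
        rw [Filter.EventuallyEq.deriv_eq hderiv_g]
        exact hrhs.deriv
      have hgmax : IsLocalMax g 0 := by
        have h1 : ∀ᶠ t in 𝓝 (0:ℝ), w (L t) ≤ w y₀ := hLten.eventually hloc
        have h2 : g 0 = w y₀ := by rw [hg_def]; simp [hL0]
        rw [IsLocalMax, IsMaxFilter, h2]
        exact h1
      have hfinal := second_deriv_nonpos_of_isLocalMax
        (f := g)
        (by filter_upwards [hgd] with t ht using ht.differentiableAt)
        (by
          rw [Filter.EventuallyEq.differentiableAt_iff hderiv_g]
          exact hrhs.differentiableAt)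
        hgmax
      rw [hderiv2] at hfinal
      have hneg : (-2 : ℝ) / m = -(2 / m) := by ring
      rw [hneg] at hfinal
      linarith
    have hsum : lap u y₀ ≤ n * (2 / m) := by
      rw [lap]
      calc (∑ i : Fin n, fderiv ℝ (fun y => fderiv ℝ u y (EuclideanSpace.single i 1)) y₀
            (EuclideanSpace.single i 1))
          ≤ ∑ _i : Fin n, 2 / m := Finset.sum_le_sum fun i _ => key i
        _ = n * (2 / m) := by simp [Finset.sum_const, mul_comm]
    have h1 := hΔ y₀ hy₀Ω
    have h2 : m ≤ n * 2 := by
      have := le_trans h1 hsum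
      calc m = 1 * m := (one_mul m).symm
        _ ≤ (n * (2 / m)) * m := by nlinarith
        _ = n * 2 := by field_simp
    rw [hm_def] at h2
    linarith
  · -- boundary maximum
    have hwy₀ : w y₀ = u y₀ := by
      have hnorm : ‖y₀ - x‖ = R := by rwa [← dist_eq_norm]
      simp [hw_def, hnorm]
    have h1 : w x ≤ w y₀ := hy₀max (mem_closedBall_self hR.le)
    have h2 : u y₀ ≤ c := hc _ (hsub hy₀mem)
    rw [hwx, hwy₀] at h1
    linarith
end

section
/- For n ≥ 3, the integral V(r) = ∫_{E(r)} |y|²/s² dy ds over the heatball E(r) = {(y,s) ∈ ℝⁿ × ℝ : 0 < s ≤ r²/(4π), |y| ≤ (2ns·log(r²/(4πs)))^{1/2}} is finite, and satisfies V(r) = rⁿ V(1). -/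
open MeasureTheory Set Real
open scoped ENNReal

/-- The (reflected, centred) heatball
`E(r) = {(y,s) : 0 < s ≤ r²/(4π), |y| ≤ (2ns log(r²/(4πs)))^{1/2}}`. -/
def heatBallE (n : ℕ) (r : ℝ) : Set (EuclideanSpace ℝ (Fin n) × ℝ) :=
  {ys | 0 < ys.2 ∧ ys.2 ≤ r ^ 2 / (4 * π) ∧
    ‖ys.1‖ ≤ Real.sqrt (2 * n * ys.2 * Real.log (r ^ 2 / (4 * π * ys.2)))}

section helpers

variable {n : ℕ}

lemma hb_integrand_meas :
    Measurable fun p : EuclideanSpace ℝ (Fin n) × ℝ => ENNReal.ofReal (‖p.1‖ ^ 2 / p.2 ^ 2) :=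
  (((measurable_fst.norm.pow measurable_const)).div
    (measurable_snd.pow measurable_const)).ennreal_ofReal

lemma hb_meas (r : ℝ) : MeasurableSet (heatBallE n r) := by
  have h1 : MeasurableSet {p : EuclideanSpace ℝ (Fin n) × ℝ | 0 < p.2} :=
    measurableSet_lt measurable_const measurable_snd
  have h2 : MeasurableSet {p : EuclideanSpace ℝ (Fin n) × ℝ | p.2 ≤ r ^ 2 / (4 * π)} :=
    measurableSet_le measurable_snd measurable_const
  have h3 : MeasurableSet {p : EuclideanSpace ℝ (Fin n) × ℝ |
      ‖p.1‖ ≤ Real.sqrt (2 * n * p.2 * Real.log (r ^ 2 / (4 * π * p.2)))} := by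
    apply measurableSet_le measurable_fst.norm
    exact (((measurable_const.mul measurable_snd).mul
      ((measurable_const.div (measurable_const.mul measurable_snd)).log)).sqrt)
  have : heatBallE n r = {p : EuclideanSpace ℝ (Fin n) × ℝ | 0 < p.2} ∩
      ({p | p.2 ≤ r ^ 2 / (4 * π)} ∩ {p |
        ‖p.1‖ ≤ Real.sqrt (2 * n * p.2 * Real.log (r ^ 2 / (4 * π * p.2)))}) := by
    ext p; simp [heatBallE, and_assoc]
  rw [this]
  exact h1.inter (h2.inter h3)

end helpers

section helpers2
variable {n : ℕ}

lemma hb_preimage {r : ℝ} (hr : 0 < r) :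
    (fun p : EuclideanSpace ℝ (Fin n) × ℝ => (r • p.1, r ^ 2 * p.2)) ⁻¹' heatBallE n r
      = heatBallE n 1 := by
  have hr2 : (0:ℝ) < r ^ 2 := by positivity
  ext ⟨y, s⟩
  simp only [heatBallE, mem_preimage, mem_setOf_eq]
  have hlog : Real.log (r ^ 2 / (4 * π * (r ^ 2 * s))) = Real.log (1 ^ 2 / (4 * π * s)) := by
    congr 1
    rcases eq_or_ne s 0 with h | h
    · simp [h]
    · have : π ≠ 0 := Real.pi_ne_zero
      field_simp
  have hnorm : ‖r • y‖ = r * ‖y‖ := by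
    rw [norm_smul, Real.norm_eq_abs, abs_of_pos hr]
  apply and_congr
  · constructor
    · intro h; nlinarith
    · intro h; positivity
  apply and_congr
  · rw [show r ^ 2 / (4 * π) = r ^ 2 * ((1:ℝ) ^ 2 / (4 * π)) by ring]
    exact mul_le_mul_iff_right₀ hr2
  · rw [hlog, hnorm,
      show 2 * (n:ℝ) * (r ^ 2 * s) * Real.log (1 ^ 2 / (4 * π * s))
        = r ^ 2 * (2 * n * s * Real.log (1 ^ 2 / (4 * π * s))) by ring,
      Real.sqrt_mul (le_of_lt hr2), Real.sqrt_sq hr.le]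
    exact mul_le_mul_iff_right₀ hr

end helpers2

section helpers3

lemma lintegral_smul_prod_smul {α β : Type*} [MeasurableSpace α] [MeasurableSpace β]
    (μ : Measure α) (ν : Measure β) [SFinite μ] [SFinite ν] (c d : ℝ≥0∞)
    {f : α × β → ℝ≥0∞} (hf : Measurable f) :
    ∫⁻ p, f p ∂((c • μ).prod (d • ν)) = (c * d) * ∫⁻ p, f p ∂(μ.prod ν) := by
  rw [MeasureTheory.lintegral_prod _ hf.aemeasurable,
    MeasureTheory.lintegral_prod _ hf.aemeasurable, lintegral_smul_measure]
  simp_rw [lintegral_smul_measure]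
  simp only [smul_eq_mul]
  rw [lintegral_const_mul d hf.lintegral_prod_right']
  ring

variable {n : ℕ}

lemma hb_scaling {r : ℝ} (hr : 0 < r) :
    (∫⁻ ys in heatBallE n r, ENNReal.ofReal (‖ys.1‖ ^ 2 / ys.2 ^ 2)) =
      ENNReal.ofReal (r ^ n) *
        ∫⁻ ys in heatBallE n 1, ENNReal.ofReal (‖ys.1‖ ^ 2 / ys.2 ^ 2) := by
  classical
  set f : EuclideanSpace ℝ (Fin n) × ℝ → ℝ≥0∞ :=
    fun p => ENNReal.ofReal (‖p.1‖ ^ 2 / p.2 ^ 2) with hfdef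
  set T : EuclideanSpace ℝ (Fin n) × ℝ → EuclideanSpace ℝ (Fin n) × ℝ :=
    fun p => (r • p.1, r ^ 2 * p.2) with hTdef
  have hT : Measurable T :=
    ((measurable_const_smul r).comp measurable_fst).prodMk
      (measurable_const.mul measurable_snd)
  set c : ℝ≥0∞ := ENNReal.ofReal ((r ^ n)⁻¹) with hcdef
  set d : ℝ≥0∞ := ENNReal.ofReal ((r ^ 2)⁻¹) with hddef
  have hmapE : Measure.map (fun x : EuclideanSpace ℝ (Fin n) => r • x) volume
      = c • (volume : Measure (EuclideanSpace ℝ (Fin n))) := by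
    have := Measure.map_addHaar_smul (volume : Measure (EuclideanSpace ℝ (Fin n))) hr.ne'
    rw [this, finrank_euclideanSpace_fin, abs_of_pos (by positivity)]
  have hmapR : Measure.map (fun x : ℝ => r ^ 2 * x) volume
      = d • (volume : Measure ℝ) := by
    rw [Real.map_volume_mul_left (by positivity : (r:ℝ) ^ 2 ≠ 0),
      abs_of_pos (by positivity : (0:ℝ) < (r ^ 2)⁻¹), hddef]
  have hmap : Measure.map T (volume : Measure (EuclideanSpace ℝ (Fin n) × ℝ))
      = (c • (volume : Measure (EuclideanSpace ℝ (Fin n)))).prod (d • (volume : Measure ℝ)) := by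
    have hpm := Measure.map_prod_map (f := fun x : EuclideanSpace ℝ (Fin n) => r • x)
      (g := fun x : ℝ => r ^ 2 * x) (volume) (volume)
      (measurable_const_smul r) (measurable_const.mul measurable_id)
    rw [Measure.volume_eq_prod, ← hmapE, ← hmapR, hpm]
    rfl
  have hfm : Measurable f := hb_integrand_meas
  have step1 : ∫⁻ p in heatBallE n r, f p ∂(Measure.map T volume)
      = ∫⁻ p in heatBallE n 1, f (T p) ∂volume := by
    rw [setLIntegral_map (hb_meas r) hfm hT, hb_preimage hr]
  have step3 : ∀ p : EuclideanSpace ℝ (Fin n) × ℝ, f (T p) = d * f p := by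
    rintro ⟨y, s⟩
    have hnorm : ‖r • y‖ = r * ‖y‖ := by
      rw [norm_smul, Real.norm_eq_abs, abs_of_pos hr]
    have hreal : ‖r • y‖ ^ 2 / (r ^ 2 * s) ^ 2 = (r ^ 2)⁻¹ * (‖y‖ ^ 2 / s ^ 2) := by
      rw [hnorm]
      rcases eq_or_ne s 0 with h | h
      · simp [h]
      · field_simp
    simp only [f, T, hddef, hreal]
    rw [ENNReal.ofReal_mul (by positivity)]
  have step4 : ∫⁻ p in heatBallE n 1, f (T p) ∂volume
      = d * ∫⁻ p in heatBallE n 1, f p ∂volume := by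
    simp_rw [step3]
    exact lintegral_const_mul d hfm
  have step5 : ∫⁻ p in heatBallE n r, f p
        ∂((c • (volume : Measure (EuclideanSpace ℝ (Fin n)))).prod (d • (volume : Measure ℝ)))
      = (c * d) * ∫⁻ p in heatBallE n r, f p ∂volume := by
    rw [← lintegral_indicator (hb_meas r) f, ← lintegral_indicator (hb_meas r) f,
      lintegral_smul_prod_smul _ _ c d (hfm.indicator (hb_meas r)), ← Measure.volume_eq_prod]
  have key : (c * d) * (∫⁻ p in heatBallE n r, f p ∂volume)
      = d * ∫⁻ p in heatBallE n 1, f p ∂volume := by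
    rw [← step5, ← hmap, step1, step4]
  have hc1 : ENNReal.ofReal (r ^ n) * c = 1 := by
    rw [hcdef, ← ENNReal.ofReal_mul (by positivity), mul_inv_cancel₀ (by positivity),
      ENNReal.ofReal_one]
  have hd1 : ENNReal.ofReal (r ^ 2) * d = 1 := by
    rw [hddef, ← ENNReal.ofReal_mul (by positivity), mul_inv_cancel₀ (by positivity),
      ENNReal.ofReal_one]
  calc ∫⁻ p in heatBallE n r, f p ∂volume
      = (ENNReal.ofReal (r ^ n) * c) * ((ENNReal.ofReal (r ^ 2) * d))
        * ∫⁻ p in heatBallE n r, f p ∂volume := by rw [hc1, hd1]; ring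
    _ = (ENNReal.ofReal (r ^ n) * ENNReal.ofReal (r ^ 2))
        * ((c * d) * ∫⁻ p in heatBallE n r, f p ∂volume) := by ring
    _ = (ENNReal.ofReal (r ^ n) * ENNReal.ofReal (r ^ 2))
        * (d * ∫⁻ p in heatBallE n 1, f p ∂volume) := by rw [key]
    _ = ENNReal.ofReal (r ^ n) * ((ENNReal.ofReal (r ^ 2) * d)
        * ∫⁻ p in heatBallE n 1, f p ∂volume) := by ring
    _ = ENNReal.ofReal (r ^ n) * ∫⁻ p in heatBallE n 1, f p ∂volume := by
        rw [hd1, one_mul]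

end helpers3

section helpers4
variable {n : ℕ}

lemma log_slice_bound {s : ℝ} (hs0 : 0 < s) :
    Real.log (1 ^ 2 / (4 * π * s)) ≤ s ^ (-(1:ℝ)/2) := by
  have hpi : (0:ℝ) < π := Real.pi_pos
  have hx : (0:ℝ) < 1 ^ 2 / (4 * π * s) := by positivity
  have h1 : Real.log (1 ^ 2 / (4 * π * s)) ≤ 2 * Real.sqrt (1 ^ 2 / (4 * π * s)) := by
    have h3 := Real.log_le_sub_one_of_pos (Real.sqrt_pos.2 hx)
    have h2 := Real.log_sqrt hx.le
    nlinarith [Real.sqrt_nonneg (1 ^ 2 / (4 * π * s))]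
  refine h1.trans ?_
  have e1 : 2 * Real.sqrt (1 ^ 2 / (4 * π * s)) = Real.sqrt (4 * (1 ^ 2 / (4 * π * s))) := by
    rw [Real.sqrt_mul (by norm_num : (0:ℝ) ≤ 4),
      show Real.sqrt 4 = 2 by
        rw [show (4:ℝ) = 2 ^ 2 by norm_num, Real.sqrt_sq (by norm_num : (0:ℝ) ≤ 2)]]
  have e2 : s ^ (-(1:ℝ)/2) = Real.sqrt s⁻¹ := by
    rw [show -(1:ℝ)/2 = -(1/2) by norm_num, Real.rpow_neg hs0.le, ← Real.sqrt_eq_rpow,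
      Real.sqrt_inv]
  rw [e1, e2]
  apply Real.sqrt_le_sqrt
  have e3 : 4 * (1 ^ 2 / (4 * π * s)) = (π * s)⁻¹ := by
    field_simp
  rw [e3]
  apply inv_anti₀ hs0
  nlinarith [Real.pi_gt_three]

end helpers4

section helpers5
variable {n : ℕ}

lemma hb_finite (hn : 3 ≤ n) :
    (∫⁻ ys in heatBallE n 1, ENNReal.ofReal (‖ys.1‖ ^ 2 / ys.2 ^ 2)) < ⊤ := by
  classical
  have hpi : (0:ℝ) < π := Real.pi_pos
  set f : EuclideanSpace ℝ (Fin n) × ℝ → ℝ≥0∞ :=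
    fun p => ENNReal.ofReal (‖p.1‖ ^ 2 / p.2 ^ 2) with hfdef
  have hfm : Measurable f := hb_integrand_meas
  set K : ℝ≥0∞ := volume (Metric.ball (0 : EuclideanSpace ℝ (Fin n)) 1) with hK
  have hKlt : K < ⊤ := measure_ball_lt_top
  set C : ℝ := (2 * n) * (Real.sqrt (2 * n)) ^ n with hC
  have hC0 : (0:ℝ) ≤ C := by positivity
  set T' : ℝ := 1 ^ 2 / (4 * π) with hT'
  have hT'pos : 0 < T' := by rw [hT']; positivity
  have h0 : (∫⁻ ys in heatBallE n 1, f ys) =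
      ∫⁻ s : ℝ, ∫⁻ y : EuclideanSpace ℝ (Fin n), (heatBallE n 1).indicator f (y, s) := by
    rw [← lintegral_indicator (hb_meas 1) f, Measure.volume_eq_prod,
      lintegral_prod_symm _ ((hfm.indicator (hb_meas 1)).aemeasurable)]
  have hbound : ∀ s : ℝ,
      (∫⁻ y : EuclideanSpace ℝ (Fin n), (heatBallE n 1).indicator f (y, s))
        ≤ (Ioc (0:ℝ) T').indicator
            (fun s => ENNReal.ofReal (C * s ^ (-(3:ℝ)/4)) * K) s := by
    intro s
    by_cases hs : s ∈ Ioc (0:ℝ) T'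
    · obtain ⟨hs0, hsT⟩ := hs
      set L : ℝ := Real.log (1 ^ 2 / (4 * π * s)) with hLdef
      have hL0 : 0 ≤ L := by
        apply Real.log_nonneg
        rw [one_pow, le_div_iff₀ (by positivity)]
        rw [hT', one_pow, le_div_iff₀ (by positivity)] at hsT
        linarith
      have hLs : L ≤ s ^ (-(1:ℝ)/2) := log_slice_bound hs0
      set R : ℝ := Real.sqrt (2 * n * s * L) with hRdef
      have hR0 : 0 ≤ R := Real.sqrt_nonneg _
      have hpoint : ∀ y : EuclideanSpace ℝ (Fin n),
          (heatBallE n 1).indicator f (y, s)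
            ≤ (Metric.closedBall (0 : EuclideanSpace ℝ (Fin n)) R).indicator
                (fun _ => ENNReal.ofReal (2 * n * L / s)) y := by
        intro y
        by_cases hy : (y, s) ∈ heatBallE n 1
        · have hy3 : ‖y‖ ≤ R := hy.2.2
          rw [indicator_of_mem hy, indicator_of_mem
            (by rwa [Metric.mem_closedBall, dist_zero_right])]
          apply ENNReal.ofReal_le_ofReal
          have hsq : ‖y‖ ^ 2 ≤ 2 * n * s * L := by
            have h2 : ‖y‖ ^ 2 ≤ R ^ 2 := by nlinarith [norm_nonneg y, hy3, hR0]
            have h3 : R ^ 2 = 2 * n * s * L := Real.sq_sqrt (by positivity)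
            linarith
          calc ‖y‖ ^ 2 / s ^ 2 ≤ (2 * n * s * L) / s ^ 2 := by
                apply div_le_div_of_nonneg_right hsq (by positivity)
            _ = 2 * n * L / s := by field_simp
        · rw [indicator_of_notMem hy]; exact zero_le
      have hreal : (2 * n * L / s) * R ^ n ≤ C * s ^ (-(3:ℝ)/4) := by
        have hs1 : s ≤ 1 := by
          rw [hT', one_pow] at hsT
          have h4 : 1 / (4 * π) ≤ 1 := by
            rw [div_le_one (by positivity)]
            nlinarith [Real.pi_gt_three]
          linarith
        have h1 : 2 * n * L / s ≤ 2 * n * s ^ (-(3:ℝ)/2) := by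
          rw [div_le_iff₀ hs0]
          have e : s ^ (-(3:ℝ)/2) * s = s ^ (-(1:ℝ)/2) := by
            have := (Real.rpow_add hs0 (-(3:ℝ)/2) 1)
            rw [Real.rpow_one] at this
            rw [← this]; norm_num
          calc 2 * ↑n * L ≤ 2 * n * (s ^ (-(1:ℝ)/2)) := by
                nlinarith [mul_nonneg (by positivity : (0:ℝ) ≤ 2 * (n:ℝ))
                  (sub_nonneg.2 hLs)]
            _ = 2 * n * s ^ (-(3:ℝ)/2) * s := by rw [← e]; ring
        have h2 : R ^ n ≤ (Real.sqrt (2 * n)) ^ n * s ^ ((n:ℝ)/4) := by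
          have hsL : s * L ≤ s ^ ((1:ℝ)/2) := by
            have := mul_le_mul_of_nonneg_left hLs hs0.le
            have e : s * s ^ (-(1:ℝ)/2) = s ^ ((1:ℝ)/2) := by
              have h4 := (Real.rpow_add hs0 1 (-(1:ℝ)/2))
              rw [Real.rpow_one] at h4
              rw [← h4]; norm_num
            calc s * L ≤ s * s ^ (-(1:ℝ)/2) := this
              _ = s ^ ((1:ℝ)/2) := e
          have hRle : R ≤ Real.sqrt (2 * n) * s ^ ((1:ℝ)/4) := by
            rw [hRdef, show 2 * (n:ℝ) * s * L = (2 * n) * (s * L) by ring,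
              Real.sqrt_mul (by positivity)]
            apply mul_le_mul_of_nonneg_left _ (Real.sqrt_nonneg _)
            calc Real.sqrt (s * L) ≤ Real.sqrt (s ^ ((1:ℝ)/2)) := Real.sqrt_le_sqrt hsL
              _ = s ^ ((1:ℝ)/4) := by
                  rw [Real.sqrt_eq_rpow, ← Real.rpow_mul hs0.le]; norm_num
          calc R ^ n ≤ (Real.sqrt (2 * n) * s ^ ((1:ℝ)/4)) ^ n := pow_le_pow_left₀ hR0 hRle n
            _ = (Real.sqrt (2 * n)) ^ n * (s ^ ((1:ℝ)/4)) ^ n := mul_pow _ _ _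
            _ = (Real.sqrt (2 * n)) ^ n * s ^ ((n:ℝ)/4) := by
                congr 1
                rw [← Real.rpow_natCast (s ^ ((1:ℝ)/4)) n, ← Real.rpow_mul hs0.le]
                congr 1
                ring
        calc (2 * n * L / s) * R ^ n
            ≤ (2 * n * s ^ (-(3:ℝ)/2)) * ((Real.sqrt (2 * n)) ^ n * s ^ ((n:ℝ)/4)) := by
              apply mul_le_mul h1 h2 (pow_nonneg hR0 n) (by positivity)
          _ = C * (s ^ (-(3:ℝ)/2) * s ^ ((n:ℝ)/4)) := by rw [hC]; ring
          _ = C * s ^ ((n:ℝ)/4 - 3/2) := by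
              rw [← Real.rpow_add hs0]; ring_nf
          _ ≤ C * s ^ (-(3:ℝ)/4) := by
              apply mul_le_mul_of_nonneg_left _ hC0
              apply Real.rpow_le_rpow_of_exponent_ge hs0 hs1
              have : (3:ℝ) ≤ (n:ℝ) := by exact_mod_cast hn
              linarith
      calc (∫⁻ y : EuclideanSpace ℝ (Fin n), (heatBallE n 1).indicator f (y, s))
          ≤ ∫⁻ y : EuclideanSpace ℝ (Fin n),
              (Metric.closedBall (0 : EuclideanSpace ℝ (Fin n)) R).indicator
                (fun _ => ENNReal.ofReal (2 * n * L / s)) y := lintegral_mono hpoint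
        _ = ENNReal.ofReal (2 * n * L / s) *
              volume (Metric.closedBall (0 : EuclideanSpace ℝ (Fin n)) R) :=
            lintegral_indicator_const measurableSet_closedBall _
        _ = ENNReal.ofReal (2 * n * L / s) *
              (ENNReal.ofReal (R ^ Module.finrank ℝ (EuclideanSpace ℝ (Fin n))) * K) := by
            rw [Measure.addHaar_closedBall _ _ hR0]
        _ ≤ (Ioc (0:ℝ) T').indicator
              (fun s => ENNReal.ofReal (C * s ^ (-(3:ℝ)/4)) * K) s := by
            rw [indicator_of_mem (show s ∈ Ioc (0:ℝ) T' from ⟨hs0, hsT⟩), finrank_euclideanSpace_fin, ← mul_assoc,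
              ← ENNReal.ofReal_mul (by positivity)]
            exact mul_le_mul_left (ENNReal.ofReal_le_ofReal hreal) K
    · have hz : ∀ y : EuclideanSpace ℝ (Fin n), (heatBallE n 1).indicator f (y, s) = 0 := by
        intro y
        apply indicator_of_notMem
        intro hy
        exact hs ⟨hy.1, hy.2.1⟩
      simp only [hz, lintegral_zero]
      exact zero_le
  have hfin : (∫⁻ s in Ioc (0:ℝ) T', ENNReal.ofReal (C * s ^ (-(3:ℝ)/4))) < ⊤ := by
    have hint : IntegrableOn (fun s : ℝ => C * s ^ (-(3:ℝ)/4)) (Ioo 0 T') volume := by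
      exact ((intervalIntegral.integrableOn_Ioo_rpow_iff hT'pos).2 (by norm_num)).const_mul C
    rw [← Measure.restrict_congr_set Ioo_ae_eq_Ioc]
    have hae : 0 ≤ᵐ[volume.restrict (Ioo (0:ℝ) T')] fun s : ℝ => C * s ^ (-(3:ℝ)/4) := by
      filter_upwards [ae_restrict_mem measurableSet_Ioo] with s hs
      have : (0:ℝ) < s := hs.1
      positivity
    exact (hasFiniteIntegral_iff_ofReal hae).1 hint.hasFiniteIntegral
  calc (∫⁻ ys in heatBallE n 1, f ys)
      = ∫⁻ s : ℝ, ∫⁻ y : EuclideanSpace ℝ (Fin n), (heatBallE n 1).indicator f (y, s) := h0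
    _ ≤ ∫⁻ s : ℝ, (Ioc (0:ℝ) T').indicator
          (fun s => ENNReal.ofReal (C * s ^ (-(3:ℝ)/4)) * K) s := lintegral_mono hbound
    _ = ∫⁻ s in Ioc (0:ℝ) T', ENNReal.ofReal (C * s ^ (-(3:ℝ)/4)) * K :=
        lintegral_indicator measurableSet_Ioc _
    _ = (∫⁻ s in Ioc (0:ℝ) T', ENNReal.ofReal (C * s ^ (-(3:ℝ)/4))) * K :=
        lintegral_mul_const' K _ hKlt.ne
    _ < ⊤ := ENNReal.mul_lt_top hfin hKlt

end helpers5

/-- for `n ≥ 3`, `V(r) = ∫_{E(r)} |y|²/s² dy ds` is finite and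
`V(r) = rⁿ V(1)`. -/
theorem stmt10 (n : ℕ) (hn : 3 ≤ n) (r : ℝ) (hr : 0 < r) :
    (∫⁻ ys in heatBallE n r, ENNReal.ofReal (‖ys.1‖ ^ 2 / ys.2 ^ 2)) < ⊤ ∧
    (∫⁻ ys in heatBallE n r, ENNReal.ofReal (‖ys.1‖ ^ 2 / ys.2 ^ 2)) =
      ENNReal.ofReal (r ^ n) *
        ∫⁻ ys in heatBallE n 1, ENNReal.ofReal (‖ys.1‖ ^ 2 / ys.2 ^ 2) := by
  have hscale := hb_scaling (n := n) hr
  have hfin := hb_finite (n := n) hn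
  refine ⟨?_, hscale⟩
  rw [hscale]
  exact ENNReal.mul_lt_top ENNReal.ofReal_lt_top hfin
end

section
/- Fix an open bounded set B ⊆ ℝⁿ containing 0, positive reals λ₁,…,λₙ with dilations δ_r(x) = (r^{λ₁}x₁,…,r^{λₙ}xₙ), degree A = λ₁ + … + λₙ, balls B_r(a) = a + δ_r(B), and suppose there exists a bounded positive measurable radius function R on B with closure of B_{R(a)}(a) ⊆ B and R(a)/R(x) ≤ K for all x in the closure of B_{R(a)}(a). Let C > 0 and 0 < p < 1. Then for every locally bounded nonnegative function f on an open set Ω satisfying f(a) ≤ (C/r^A) ∫_{B_r(a)} f whenever the closure of B_r(a) ⊆ Ω, one has f(a)^p ≤ (C̃_p/r^A) ∫_{B_r(a)} f^p whenever the closure of B_r(a) ⊆ Ω, where C̃_p = 2 R(0)^{−A} (2K^A)^{(1−p)/p} C. -/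
open MeasureTheory Set

/-- The anisotropic dilation `δ_r(x) = (r^{λ₁}x₁, …, r^{λₙ}xₙ)`. -/
noncomputable def dil {n : ℕ} (lam : Fin n → ℝ) (r : ℝ) (x : Fin n → ℝ) : Fin n → ℝ :=
  fun i => r ^ (lam i) * x i

/-- The ball `B_r(a) = a + δ_r(B)` associated to the unit ball `B` and the dilations. -/
noncomputable def dball {n : ℕ} (B : Set (Fin n → ℝ)) (lam : Fin n → ℝ)
    (a : Fin n → ℝ) (r : ℝ) : Set (Fin n → ℝ) :=
  (fun x => a + dil lam r x) '' B

/-- The affine map `x ↦ c + δ_s x` as a homeomorphism, for `s > 0`. -/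
noncomputable def dilHomeo {n : ℕ} (lam : Fin n → ℝ) (c : Fin n → ℝ) (s : ℝ) (hs : 0 < s) :
    (Fin n → ℝ) ≃ₜ (Fin n → ℝ) :=
  Homeomorph.piCongrRight fun i =>
    (Homeomorph.mulLeft₀ (s ^ lam i) (Real.rpow_pos_of_pos hs _).ne').trans
      (Homeomorph.addLeft (c i))

lemma dilHomeo_apply {n : ℕ} (lam : Fin n → ℝ) (c : Fin n → ℝ) (s : ℝ) (hs : 0 < s)
    (x : Fin n → ℝ) : dilHomeo lam c s hs x = c + dil lam s x := by
  funext i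
  simp [dilHomeo, dil, Homeomorph.piCongrRight]

lemma dball_eq_image {n : ℕ} (B : Set (Fin n → ℝ)) (lam : Fin n → ℝ) (c : Fin n → ℝ)
    (s : ℝ) (hs : 0 < s) : dball B lam c s = dilHomeo lam c s hs '' B := by
  unfold dball
  exact image_congr fun x _ => (dilHomeo_apply lam c s hs x).symm

lemma isOpen_dball {n : ℕ} {B : Set (Fin n → ℝ)} (hB : IsOpen B) (lam : Fin n → ℝ)
    (c : Fin n → ℝ) {s : ℝ} (hs : 0 < s) : IsOpen (dball B lam c s) := by
  rw [dball_eq_image B lam c s hs]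
  exact (dilHomeo lam c s hs).isOpen_image.2 hB

lemma isBounded_dball {n : ℕ} {B : Set (Fin n → ℝ)} (hB : Bornology.IsBounded B)
    (lam : Fin n → ℝ) (c : Fin n → ℝ) (s : ℝ) : Bornology.IsBounded (dball B lam c s) := by
  obtain ⟨m, hm⟩ := hB.exists_norm_le
  rw [isBounded_iff_forall_norm_le]
  refine ⟨‖c‖ + (∑ i, |s ^ lam i|) * m, ?_⟩
  rintro y ⟨x, hx, rfl⟩
  have hxm : ‖x‖ ≤ m := hm x hx
  have hm0 : 0 ≤ m := (norm_nonneg x).trans hxm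
  refine (norm_add_le _ _).trans (add_le_add le_rfl ?_)
  have hsum0 : 0 ≤ (∑ i, |s ^ lam i|) := Finset.sum_nonneg fun i _ => abs_nonneg _
  rw [pi_norm_le_iff_of_nonneg (by positivity)]
  intro i
  have h1 : ‖dil lam s x i‖ = |s ^ lam i| * |x i| := by
    simp [dil, abs_mul]
  rw [h1]
  have h2 : |s ^ lam i| ≤ ∑ j, |s ^ lam j| :=
    Finset.single_le_sum (f := fun j => |s ^ lam j|) (fun j _ => abs_nonneg _) (Finset.mem_univ i)
  have h3 : |x i| ≤ m := (norm_le_pi_norm x i).trans hxm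
  exact mul_le_mul h2 h3 (abs_nonneg _) hsum0

lemma image_dball {n : ℕ} (B : Set (Fin n → ℝ)) (lam : Fin n → ℝ) (a x : Fin n → ℝ)
    {r s : ℝ} (hr : 0 < r) (hs : 0 < s) :
    (fun y => a + dil lam r y) '' dball B lam x s = dball B lam (a + dil lam r x) (r * s) := by
  unfold dball
  rw [image_image]
  refine image_congr fun b _ => ?_
  funext i
  simp only [Pi.add_apply, dil]
  rw [Real.mul_rpow hr.le hs.le]
  ring

lemma aux_le_rpow {t S p : ℝ} (hp : 0 < p) (hp1 : p < 1) (ht : 0 ≤ t) (hts : t ≤ S) :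
    t ≤ S ^ (1 - p) * t ^ p := by
  rcases eq_or_lt_of_le ht with h | h
  · rw [← h, Real.zero_rpow hp.ne', mul_zero]
  · calc t = t ^ (1 - p) * t ^ p := by
          rw [← Real.rpow_add h, sub_add_cancel, Real.rpow_one]
    _ ≤ S ^ (1 - p) * t ^ p :=
        mul_le_mul_of_nonneg_right (Real.rpow_le_rpow ht hts (by linarith))
          (Real.rpow_nonneg ht p)

/-- Pavlović-type theorem: given a system of balls with a radius
function `R` with comparability constant `K`, any locally bounded nonnegative `f`
satisfying mean value inequalities with constant `C` satisfies the mean value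
inequalities for `f^p`, `0 < p < 1`, with constant `C̃_p = 2R(0)^{−A}(2K^A)^{(1−p)/p}C`. -/
theorem stmt12 (n : ℕ) (B : Set (Fin n → ℝ)) (hBopen : IsOpen B)
    (hBbdd : Bornology.IsBounded B) (h0B : (0 : Fin n → ℝ) ∈ B)
    (lam : Fin n → ℝ) (hlam : ∀ i, 0 < lam i)
    (A : ℝ) (hA : A = ∑ i, lam i)
    (R : (Fin n → ℝ) → ℝ) (hRmeas : Measurable R)
    (hRbdd : ∃ M, ∀ a ∈ B, R a ≤ M)
    (hRpos : ∀ a ∈ B, 0 < R a)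
    (hRsub : ∀ a ∈ B, closure (dball B lam a (R a)) ⊆ B)
    (K : ℝ) (hK : ∀ a ∈ B, ∀ x ∈ closure (dball B lam a (R a)), R a / R x ≤ K)
    (C p : ℝ) (hC : 0 < C) (hp : 0 < p) (hp1 : p < 1)
    (Ω : Set (Fin n → ℝ)) (hΩ : IsOpen Ω)
    (f : (Fin n → ℝ) → ℝ) (hf : Measurable f)
    (hfnn : ∀ x ∈ Ω, 0 ≤ f x)
    (hfloc : ∀ x ∈ Ω, ∃ M', ∀ᶠ y in nhds x, f y ≤ M')
    (hmvi : ∀ a r, 0 < r → closure (dball B lam a r) ⊆ Ω →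
      f a ≤ C / r ^ A * ∫ x in dball B lam a r, f x) :
    ∀ a r, 0 < r → closure (dball B lam a r) ⊆ Ω →
      f a ^ p ≤ (2 * R 0 ^ (-A) * (2 * K ^ A) ^ ((1 - p) / p) * C) / r ^ A *
        ∫ x in dball B lam a r, f x ^ p := by
  intro a r hr hcl
  obtain ⟨M, hM⟩ := hRbdd
  have hR0 : 0 < R 0 := hRpos 0 h0B
  have hM0 : 0 < M := hR0.trans_le (hM 0 h0B)
  have hself : ∀ (c : Fin n → ℝ) (s : ℝ), c ∈ dball B lam c s := by
    intro c s
    exact ⟨0, h0B, by funext i; simp [dil]⟩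
  have hK1 : 1 ≤ K := by
    have := hK 0 h0B 0 (subset_closure (hself 0 _))
    rwa [div_self hR0.ne'] at this
  have hK0 : 0 < K := lt_of_lt_of_le one_pos hK1
  have hA0 : 0 ≤ A := by
    rw [hA]; exact Finset.sum_nonneg fun i _ => (hlam i).le
  have hApp : 0 ≤ A / p := div_nonneg hA0 hp.le
  have h1p : 0 < 1 - p := by linarith
  set D := dball B lam a r with hDdef
  set T := dilHomeo lam a r hr with hTdef
  have hTapp : ∀ x, T x = a + dil lam r x := dilHomeo_apply lam a r hr
  have hTB : ⇑T '' B = D := (dball_eq_image B lam a r hr).symm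
  have haD : a ∈ D := hself a r
  have hDopen : IsOpen D := isOpen_dball hBopen lam a hr
  have hDbdd : Bornology.IsBounded D := isBounded_dball hBbdd lam a r
  have hDmeas : MeasurableSet D := hDopen.measurableSet
  have hDfin : volume D < ⊤ := hDbdd.measure_lt_top
  have hDΩ : D ⊆ Ω := subset_closure.trans hcl
  have haΩ : a ∈ Ω := hDΩ haD
  -- f is bounded on closure D
  have hbound : ∃ M₀ : ℝ, 0 ≤ M₀ ∧ ∀ z ∈ closure D, f z ≤ M₀ := by
    have hcomp : IsCompact (closure D) := hDbdd.isCompact_closure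
    have hP : ∀ x : Fin n → ℝ, ∃ M', x ∈ closure D → ∀ᶠ y in nhds x, f y ≤ M' := by
      intro x
      by_cases hx : x ∈ closure D
      · obtain ⟨M', hM'⟩ := hfloc x (hcl hx)
        exact ⟨M', fun _ => hM'⟩
      · exact ⟨0, fun h => absurd h hx⟩
    choose Mx hMx using hP
    obtain ⟨t, htK, htcov⟩ := hcomp.elim_nhds_subcover
      (fun x => {y | f y ≤ Mx x}) (fun x hx => hMx x hx)
    by_cases ht : t.Nonempty
    · refine ⟨max 0 (t.sup' ht Mx), le_max_left _ _, fun z hz => ?_⟩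
      obtain ⟨x, hxt, hzx⟩ := Set.mem_iUnion₂.1 (htcov hz)
      exact le_trans (le_trans hzx (Finset.le_sup' Mx hxt)) (le_max_right _ _)
    · refine ⟨0, le_refl _, fun z hz => ?_⟩
      obtain ⟨x, hxt, _⟩ := Set.mem_iUnion₂.1 (htcov hz)
      exact absurd ⟨x, hxt⟩ ht
  obtain ⟨M₀, hM₀0, hM₀⟩ := hbound
  have hfD : ∀ z ∈ D, 0 ≤ f z := fun z hz => hfnn z (hDΩ hz)
  have hfpmeas : Measurable fun z => f z ^ p := by fun_prop
  -- integrability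
  have hintD : ∀ g : (Fin n → ℝ) → ℝ, Measurable g → (∀ z ∈ D, |g z| ≤ M₀ ^ p + M₀) →
      IntegrableOn g D := by
    intro g hg hgb
    refine Integrable.mono' (g := fun _ => M₀ ^ p + M₀)
      (integrableOn_const hDfin.ne) hg.aestronglyMeasurable ?_
    exact (ae_restrict_iff' hDmeas).2 (Filter.Eventually.of_forall hgb)
  have hfint : IntegrableOn f D := by
    refine hintD f hf fun z hz => ?_
    rw [abs_of_nonneg (hfD z hz)]
    have := hM₀ z (subset_closure hz)
    have : (0:ℝ) ≤ M₀ ^ p := Real.rpow_nonneg hM₀0 p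
    linarith [hM₀ z (subset_closure hz)]
  have hfpint : IntegrableOn (fun z => f z ^ p) D := by
    refine hintD _ hfpmeas fun z hz => ?_
    rw [abs_of_nonneg (Real.rpow_nonneg (hfD z hz) p)]
    have h1 : f z ^ p ≤ M₀ ^ p :=
      Real.rpow_le_rpow (hfD z hz) (hM₀ z (subset_closure hz)) hp.le
    linarith
  set I := ∫ z in D, f z ^ p with hIdef
  have hI0 : 0 ≤ I :=
    setIntegral_nonneg hDmeas fun z hz => Real.rpow_nonneg (hfD z hz) p
  -- the weighted supremum N
  set E : Set ℝ := (fun x => (r * R x) ^ (A / p) * f (T x)) '' B with hEdef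
  have hEbdd : BddAbove E := by
    refine ⟨(r * M) ^ (A / p) * M₀, ?_⟩
    rintro _ ⟨x, hxB, rfl⟩
    have hTxD : T x ∈ D := hTB ▸ mem_image_of_mem _ hxB
    have h1 : (r * R x) ^ (A / p) ≤ (r * M) ^ (A / p) :=
      Real.rpow_le_rpow (mul_nonneg hr.le (hRpos x hxB).le)
        (mul_le_mul_of_nonneg_left (hM x hxB) hr.le) hApp
    exact mul_le_mul h1 (hM₀ _ (subset_closure hTxD)) (hfD _ hTxD)
      (Real.rpow_nonneg (by positivity) _)
  set N := sSup E with hNdef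
  have hNa : (r * R 0) ^ (A / p) * f a ≤ N := by
    have : T 0 = a := by rw [hTapp]; funext i; simp [dil]
    exact le_csSup hEbdd ⟨0, h0B, by simp only []; rw [this]⟩
  have hN0 : 0 ≤ N :=
    le_trans (mul_nonneg (Real.rpow_nonneg (mul_pos hr hR0).le _) (hfnn a haΩ)) hNa
  set e' : ℝ := A * (1 - p) / p with he'def
  set c : ℝ := C * K ^ e' with hcdef
  have hc0 : 0 < c := mul_pos hC (Real.rpow_pos_of_pos hK0 _)
  -- key inequality for each element of E
  have hkey : ∀ b ∈ E, b ≤ c * (N ^ (1 - p) * I) := by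
    rintro _ ⟨x, hxB, rfl⟩
    simp only []
    have hRx : 0 < R x := hRpos x hxB
    set u : ℝ := r * R x with hudef
    have hu : 0 < u := mul_pos hr hRx
    have hTcoe : ⇑T = fun y => a + dil lam r y := funext hTapp
    have himg : ⇑T '' dball B lam x (R x) = dball B lam (T x) u := by
      rw [hTcoe]
      exact image_dball B lam a x hr hRx
    have hclball : closure (dball B lam (T x) u) = ⇑T '' closure (dball B lam x (R x)) := by
      rw [← himg, T.image_closure]
    have hclsubD : closure (dball B lam (T x) u) ⊆ D := by
      rw [hclball, ← hTB]
      exact image_mono (hRsub x hxB)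
    have hballD : dball B lam (T x) u ⊆ D := subset_closure.trans hclsubD
    have hmv := hmvi (T x) u hu (hclsubD.trans hDΩ)
    set S : ℝ := (K / u) ^ (A / p) * N with hSdef
    have hS0 : 0 ≤ S := mul_nonneg (Real.rpow_nonneg (div_nonneg hK0.le hu.le) _) hN0
    have hfS : ∀ z ∈ closure (dball B lam (T x) u), f z ≤ S := by
      intro z hz
      rw [hclball] at hz
      obtain ⟨w, hw, rfl⟩ := hz
      have hwB : w ∈ B := hRsub x hxB hw
      have hRw : 0 < R w := hRpos w hwB
      have h1 : (r * R w) ^ (A / p) * f (T w) ≤ N := le_csSup hEbdd ⟨w, hwB, rfl⟩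
      have h2 : f (T w) ≤ N / (r * R w) ^ (A / p) := by
        rw [le_div_iff₀ (Real.rpow_pos_of_pos (mul_pos hr hRw) _)]
        calc f (T w) * (r * R w) ^ (A / p) = (r * R w) ^ (A / p) * f (T w) := mul_comm _ _
          _ ≤ N := h1
      have hKw : R x ≤ K * R w := by
        have := hK x hxB w hw
        rwa [div_le_iff₀ hRw] at this
      have h3 : u / K ≤ r * R w := by
        rw [div_le_iff₀ hK0]
        calc u = r * R x := rfl
          _ ≤ r * (K * R w) := by nlinarith
          _ = r * R w * K := by ring
      have h4 : (u / K) ^ (A / p) ≤ (r * R w) ^ (A / p) :=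
        Real.rpow_le_rpow (div_nonneg hu.le hK0.le) h3 hApp
      calc f (T w) ≤ N / (r * R w) ^ (A / p) := h2
        _ ≤ N / (u / K) ^ (A / p) :=
            div_le_div_of_nonneg_left hN0 (Real.rpow_pos_of_pos (div_pos hu hK0) _) h4
        _ = S := by
            rw [hSdef, ← inv_div u K, Real.inv_rpow (div_nonneg hu.le hK0.le)]
            rw [div_eq_mul_inv, mul_comm]
    have hptw : ∀ z ∈ dball B lam (T x) u, f z ≤ S ^ (1 - p) * f z ^ p := fun z hz =>
      aux_le_rpow hp hp1 (hfD z (hballD hz)) (hfS z (subset_closure hz))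
    have hbmeas : MeasurableSet (dball B lam (T x) u) :=
      (isOpen_dball hBopen lam (T x) hu).measurableSet
    have hint1 : IntegrableOn f (dball B lam (T x) u) := hfint.mono_set hballD
    have hint2 : IntegrableOn (fun z => S ^ (1 - p) * f z ^ p) (dball B lam (T x) u) :=
      (hfpint.mono_set hballD).const_mul _
    have step1 : ∫ z in dball B lam (T x) u, f z ≤ S ^ (1 - p) * ∫ z in dball B lam (T x) u, f z ^ p := by
      rw [← MeasureTheory.integral_const_mul]
      exact setIntegral_mono_on hint1 hint2 hbmeas hptw
    have step2 : ∫ z in dball B lam (T x) u, f z ^ p ≤ I := by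
      refine setIntegral_mono_set hfpint ?_ hballD.eventuallyLE
      exact (ae_restrict_iff' hDmeas).2
        (Filter.Eventually.of_forall fun z hz => Real.rpow_nonneg (hfD z hz) p)
    have hchain : f (T x) ≤ C / u ^ A * (S ^ (1 - p) * I) := by
      refine le_trans hmv (mul_le_mul_of_nonneg_left ?_ (by positivity))
      exact le_trans step1 (mul_le_mul_of_nonneg_left step2 (Real.rpow_nonneg hS0 _))
    have hSexp : S ^ (1 - p) = K ^ e' / u ^ e' * N ^ (1 - p) := by
      rw [hSdef, Real.mul_rpow (Real.rpow_nonneg (div_nonneg hK0.le hu.le) _) hN0,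
        ← Real.rpow_mul (div_nonneg hK0.le hu.le)]
      have hee : A / p * (1 - p) = e' := by rw [he'def]; ring
      rw [hee, Real.div_rpow hK0.le hu.le]
    have hupow : u ^ A * u ^ e' = u ^ (A / p) := by
      rw [← Real.rpow_add hu]
      congr 1
      rw [he'def]
      field_simp
      ring
    calc (r * R x) ^ (A / p) * f (T x)
        ≤ u ^ (A / p) * (C / u ^ A * (S ^ (1 - p) * I)) :=
          mul_le_mul_of_nonneg_left hchain (Real.rpow_nonneg hu.le _)
      _ = c * (N ^ (1 - p) * I) := by
          rw [hSexp, hcdef]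
          have hrearr : u ^ (A / p) * (C / u ^ A * (K ^ e' / u ^ e' * N ^ (1 - p) * I)) =
              C * K ^ e' * (N ^ (1 - p) * I) * (u ^ (A / p) / (u ^ A * u ^ e')) := by ring
          rw [hrearr, hupow, div_self (Real.rpow_pos_of_pos hu (A / p)).ne', mul_one]
  have hNle : N ≤ c * (N ^ (1 - p) * I) :=
    Real.sSup_le hkey (mul_nonneg hc0.le (mul_nonneg (Real.rpow_nonneg hN0 _) hI0))
  have hrR0 : 0 < r * R 0 := mul_pos hr hR0
  have hconst0 : 0 ≤ 2 * R 0 ^ (-A) * (2 * K ^ A) ^ ((1 - p) / p) * C :=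
    mul_nonneg (mul_nonneg (mul_nonneg (by norm_num) (Real.rpow_nonneg hR0.le _))
      (Real.rpow_nonneg (mul_nonneg (by norm_num) (Real.rpow_nonneg hK0.le _)) _)) hC.le
  rcases eq_or_lt_of_le hN0 with hNz | hNpos
  · -- N = 0 : then f a = 0
    have hfa0 : f a = 0 := by
      have h1 : (r * R 0) ^ (A / p) * f a ≤ 0 := hNa.trans hNz.symm.le
      have h2 : 0 < (r * R 0) ^ (A / p) := Real.rpow_pos_of_pos hrR0 _
      nlinarith [hfnn a haΩ]
    rw [hfa0, Real.zero_rpow hp.ne']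
    exact mul_nonneg (div_nonneg hconst0 (Real.rpow_nonneg hr.le _)) hI0
  · -- N > 0
    have hNp : N ^ p ≤ c * I := by
      have h1 : N * N ^ (p - 1) ≤ c * (N ^ (1 - p) * I) * N ^ (p - 1) :=
        mul_le_mul_of_nonneg_right hNle (Real.rpow_nonneg hNpos.le _)
      have h2 : N * N ^ (p - 1) = N ^ p := by
        calc N * N ^ (p - 1) = N ^ (1 : ℝ) * N ^ (p - 1) := by rw [Real.rpow_one]
          _ = N ^ (1 + (p - 1)) := (Real.rpow_add hNpos _ _).symm
          _ = N ^ p := by norm_num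
      have h3 : c * (N ^ (1 - p) * I) * N ^ (p - 1) = c * I * (N ^ (1 - p) * N ^ (p - 1)) := by
        ring
      have h4 : N ^ (1 - p) * N ^ (p - 1) = 1 := by
        rw [← Real.rpow_add hNpos]
        norm_num
      rw [h2, h3, h4, mul_one] at h1
      exact h1
    have hfa : f a ≤ N / (r * R 0) ^ (A / p) := by
      rw [le_div_iff₀ (Real.rpow_pos_of_pos hrR0 _)]
      calc f a * (r * R 0) ^ (A / p) = (r * R 0) ^ (A / p) * f a := mul_comm _ _
        _ ≤ N := hNa
    have hfap : f a ^ p ≤ N ^ p / (r * R 0) ^ A := by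
      have h5 : f a ^ p ≤ (N / (r * R 0) ^ (A / p)) ^ p :=
        Real.rpow_le_rpow (hfnn a haΩ) hfa hp.le
      rw [Real.div_rpow hNpos.le (Real.rpow_nonneg hrR0.le _), ← Real.rpow_mul hrR0.le,
        div_mul_cancel₀ A hp.ne'] at h5
      exact h5
    have hq0 : 0 ≤ (1 - p) / p := div_nonneg h1p.le hp.le
    have h12q : 1 ≤ 2 * (2 : ℝ) ^ ((1 - p) / p) := by
      have : (1 : ℝ) ≤ (2 : ℝ) ^ ((1 - p) / p) := Real.one_le_rpow (by norm_num) hq0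
      linarith
    have hX0 : 0 ≤ C * K ^ e' / (r ^ A * R 0 ^ A) :=
      div_nonneg (mul_nonneg hC.le (Real.rpow_nonneg hK0.le _))
        (mul_nonneg (Real.rpow_nonneg hr.le _) (Real.rpow_nonneg hR0.le _))
    have hConsteq : 2 * R 0 ^ (-A) * (2 * K ^ A) ^ ((1 - p) / p) * C / r ^ A =
        2 * 2 ^ ((1 - p) / p) * (C * K ^ e' / (r ^ A * R 0 ^ A)) := by
      rw [Real.rpow_neg hR0.le,
        Real.mul_rpow (by norm_num) (Real.rpow_nonneg hK0.le _), ← Real.rpow_mul hK0.le]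
      have hee : A * ((1 - p) / p) = e' := by rw [he'def]; ring
      rw [hee]
      ring
    calc f a ^ p ≤ N ^ p / (r * R 0) ^ A := hfap
      _ ≤ c * I / (r * R 0) ^ A := by
          have := Real.rpow_pos_of_pos hrR0 A
          gcongr
      _ = C * K ^ e' / (r ^ A * R 0 ^ A) * I := by
          rw [Real.mul_rpow hr.le hR0.le, hcdef]
          ring
      _ ≤ 2 * 2 ^ ((1 - p) / p) * (C * K ^ e' / (r ^ A * R 0 ^ A)) * I :=
          mul_le_mul_of_nonneg_right (le_mul_of_one_le_left hX0 h12q) hI0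
      _ = 2 * R 0 ^ (-A) * (2 * K ^ A) ^ ((1 - p) / p) * C / r ^ A * I := by
          rw [hConsteq]
end

section
/- Let B be an open bounded subset of ℝⁿ containing 0, and δ_r(x) = (r^{λ₁}x₁,…,r^{λₙ}xₙ) for positive reals λᵢ, with balls B_r(a) = a + δ_r(B). Then there exists a positive lower semicontinuous function R on B such that for every a ∈ B, B_{R(a)}(a) ⊆ B, and R(a)/R(x) ≤ 4 whenever x ∈ B_{R(a)}(a). -/
open MeasureTheory Set

/-- existence of a radius function: there is a positive lower
semicontinuous `R` on `B` with `B_{R(a)}(a) ⊆ B` and `R(a)/R(x) ≤ 4` for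
`x ∈ B_{R(a)}(a)`. -/
theorem stmt13 (n : ℕ) (B : Set (Fin n → ℝ)) (hBopen : IsOpen B)
    (hBbdd : Bornology.IsBounded B) (h0B : (0 : Fin n → ℝ) ∈ B)
    (lam : Fin n → ℝ) (hlam : ∀ i, 0 < lam i) :
    ∃ R : (Fin n → ℝ) → ℝ, LowerSemicontinuousOn R B ∧
      (∀ a ∈ B, 0 < R a) ∧
      ∀ a ∈ B, dball B lam a (R a) ⊆ B ∧
        ∀ x ∈ dball B lam a (R a), R a / R x ≤ 4 := by
  rcases Nat.eq_zero_or_pos n with hn | hn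
  · subst hn
    refine ⟨fun _ => 1, lowerSemicontinuous_const.lowerSemicontinuousOn B,
      fun a _ => one_pos, fun a ha => ⟨?_, fun x _ => by norm_num⟩⟩
    intro x _
    have : x = 0 := Subsingleton.elim x 0
    rw [this]; exact h0B
  -- n ≥ 1
  have hFinNe : Nonempty (Fin n) := ⟨⟨0, hn⟩⟩
  have huNe : (Finset.univ : Finset (Fin n)).Nonempty := Finset.univ_nonempty
  obtain ⟨C, hC⟩ := hBbdd.exists_norm_le
  set M : ℝ := max C 0 + 1 with hM
  have hMpos : 0 < M := by positivity
  have hBM : ∀ x ∈ B, ∀ i, |x i| < M := by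
    intro x hx i
    calc |x i| ≤ ‖x‖ := by simpa using norm_le_pi_norm x i
      _ ≤ C := hC x hx
      _ < M := by have := le_max_left C 0; simp only [hM]; linarith
  set Adm : (Fin n → ℝ) → ℝ → Prop :=
    fun a r => 0 < r ∧ ∀ z : Fin n → ℝ, (∀ i, |z i| < r ^ lam i * M) → a + z ∈ B with hAdm
  set S : (Fin n → ℝ) → ℝ := fun a => sSup {r | Adm a r} with hSdef
  -- downward closedness
  have hdown : ∀ a : Fin n → ℝ, ∀ r r' : ℝ, Adm a r' → 0 < r → r ≤ r' → Adm a r := by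
    intro a r r' ⟨hr'pos, h'⟩ hrpos hle
    refine ⟨hrpos, fun z hz => h' z fun i => lt_of_lt_of_le (hz i) ?_⟩
    exact mul_le_mul_of_nonneg_right
      (Real.rpow_le_rpow hrpos.le hle (hlam i).le) hMpos.le
  -- nonemptiness of the admissible set
  have hne : ∀ a ∈ B, ∃ r, Adm a r := by
    intro a ha
    obtain ⟨ε, hεpos, hball⟩ := Metric.isOpen_iff.mp hBopen a ha
    set μ := Finset.univ.inf' huNe lam with hμ
    have hμpos : 0 < μ := (Finset.lt_inf'_iff huNe).mpr (fun i _ => hlam i)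
    have hμle : ∀ i, μ ≤ lam i := fun i => Finset.inf'_le lam (Finset.mem_univ i)
    set ρ := min 1 (ε / (2 * M)) with hρ
    have hρpos : 0 < ρ := lt_min one_pos (by positivity)
    have hρ1 : ρ ≤ 1 := min_le_left _ _
    set r := ρ ^ (1 / μ) with hr
    have hrpos : 0 < r := Real.rpow_pos_of_pos hρpos _
    have hr1 : r ≤ 1 := Real.rpow_le_one hρpos.le hρ1 (by positivity)
    have hrμ : r ^ μ = ρ := by
      rw [hr, ← Real.rpow_mul hρpos.le, one_div, inv_mul_cancel₀ hμpos.ne', Real.rpow_one]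
    refine ⟨r, hrpos, fun z hz => hball ?_⟩
    rw [Metric.mem_ball, dist_eq_norm, add_sub_cancel_left]
    rw [pi_norm_lt_iff hεpos]
    intro i
    have h1 : r ^ lam i ≤ r ^ μ := Real.rpow_le_rpow_of_exponent_ge hrpos hr1 (hμle i)
    calc ‖z i‖ = |z i| := rfl
      _ < r ^ lam i * M := hz i
      _ ≤ ρ * M := by rw [← hrμ]; exact mul_le_mul_of_nonneg_right h1 hMpos.le
      _ ≤ (ε / (2 * M)) * M := mul_le_mul_of_nonneg_right (min_le_right _ _) hMpos.le
      _ < ε := by rw [div_mul_eq_mul_div]; rw [div_lt_iff₀ (by positivity)]; nlinarith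
  -- boundedness of the admissible set
  set i0 : Fin n := ⟨0, hn⟩ with hi0
  have hbdd : ∀ a ∈ B, BddAbove {r | Adm a r} := by
    intro a ha
    refine ⟨(4 : ℝ) ^ (1 / lam i0), fun r hr => ?_⟩
    obtain ⟨hrpos, hmem⟩ := hr
    set z : Fin n → ℝ := fun i => r ^ lam i * M / 2 with hz
    have hzB : a + z ∈ B := by
      apply hmem
      intro i
      have : 0 < r ^ lam i * M := mul_pos (Real.rpow_pos_of_pos hrpos _) hMpos
      have hzi : z i = r ^ lam i * M / 2 := rfl
      rw [hzi, abs_of_pos (by positivity)]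
      exact half_lt_self this
    have h1 : |a i0 + z i0| < M := hBM _ hzB i0
    have h2 : |a i0| < M := hBM _ ha i0
    have hz0 : z i0 = r ^ lam i0 * M / 2 := rfl
    have h3 : r ^ lam i0 * M / 2 < 2 * M := by
      have := abs_sub_abs_le_abs_sub (a i0 + z i0) (a i0)
      have h4 : |z i0| = z i0 := abs_of_pos (by
        rw [hz0]; positivity)
      have h5 : |(a i0 + z i0) - a i0| = z i0 := by rw [add_sub_cancel_left, h4]
      have := abs_add_le (a i0 + z i0 - a i0) (a i0)
      rw [h5] at this
      have h6 : z i0 ≤ |a i0 + z i0| + |a i0| := by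
        calc z i0 = |a i0 + z i0 - a i0| := h5.symm
          _ ≤ |a i0 + z i0| + |a i0| := by
            have := abs_sub (a i0 + z i0) (a i0); linarith [abs_sub_abs_le_abs_sub (a i0 + z i0) (a i0), abs_sub_le (a i0 + z i0) 0 (a i0)]
      rw [← hz0]; linarith
    have h7 : r ^ lam i0 < 4 := by nlinarith
    by_contra hcon
    push_neg at hcon
    have h8 : ((4:ℝ) ^ (1 / lam i0)) ^ lam i0 < r ^ lam i0 :=
      Real.rpow_lt_rpow (by positivity) hcon (hlam i0)
    rw [← Real.rpow_mul (by norm_num), one_div, inv_mul_cancel₀ (hlam i0).ne',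
      Real.rpow_one] at h8
    linarith
  have hSpos : ∀ a ∈ B, 0 < S a := by
    intro a ha
    obtain ⟨r, hr⟩ := hne a ha
    exact lt_of_lt_of_le hr.1 (le_csSup (hbdd a ha) hr)
  have hSadm : ∀ a ∈ B, ∀ r, 0 < r → r < S a → Adm a r := by
    intro a ha r hrpos hrlt
    obtain ⟨r', hr', hrr'⟩ := exists_lt_of_lt_csSup (hne a ha) hrlt
    exact hdown a r r' hr' hrpos hrr'.le
  -- choice of the constant c
  have hεp : ∀ i, (0:ℝ) < (1/2 : ℝ) ^ lam i - (1/4 : ℝ) ^ lam i := fun i =>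
    sub_pos.mpr (Real.rpow_lt_rpow (by norm_num) (by norm_num) (hlam i))
  set d : Fin n → ℝ := fun i => ((1/2 : ℝ) ^ lam i - (1/4 : ℝ) ^ lam i) ^ (-(1 / lam i)) with hd
  set c : ℝ := max 4 (Finset.univ.sup' huNe d) with hc
  have hc4 : (4:ℝ) ≤ c := le_max_left _ _
  have hcpos : (0:ℝ) < c := by linarith
  have hcd : ∀ i, d i ≤ c := fun i =>
    le_trans (Finset.le_sup' d (Finset.mem_univ i)) (le_max_right _ _)
  have hkey : ∀ i, (1/c : ℝ) ^ lam i + (1/4 : ℝ) ^ lam i ≤ (1/2 : ℝ) ^ lam i := by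
    intro i
    have hdpos : 0 < d i := Real.rpow_pos_of_pos (hεp i) _
    have h1 : (1/c : ℝ) ≤ 1 / d i := one_div_le_one_div_of_le hdpos (hcd i)
    have h2 : (1 : ℝ) / d i = ((1/2 : ℝ) ^ lam i - (1/4 : ℝ) ^ lam i) ^ (1 / lam i) := by
      rw [hd]; simp only []
      rw [Real.rpow_neg (hεp i).le, one_div, inv_inv]
    have h3 : (1/c : ℝ) ^ lam i ≤ (((1/2 : ℝ) ^ lam i - (1/4 : ℝ) ^ lam i) ^ (1 / lam i)) ^ lam i :=
      Real.rpow_le_rpow (by positivity) (h2 ▸ h1) (hlam i).le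
    rw [← Real.rpow_mul (hεp i).le, one_div_mul_cancel (hlam i).ne',
      Real.rpow_one] at h3
    linarith
  -- the containment lemma
  have hsub : ∀ a ∈ B, ∀ x ∈ dball B lam a (S a / c), x ∈ B := by
    intro a ha x hx
    obtain ⟨b, hb, rfl⟩ := hx
    have hSa := hSpos a ha
    have hadm : Adm a (S a / c) :=
      hSadm a ha _ (by positivity) (div_lt_self hSa (by linarith))
    apply hadm.2
    intro i
    have hp : (0:ℝ) < (S a / c) ^ lam i := Real.rpow_pos_of_pos (by positivity) _
    calc |dil lam (S a / c) b i| = (S a / c) ^ lam i * |b i| := by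
          rw [show dil lam (S a / c) b i = (S a / c) ^ lam i * b i from rfl, abs_mul,
            abs_of_pos hp]
      _ < (S a / c) ^ lam i * M := by
          exact (mul_lt_mul_iff_right₀ hp).mpr (hBM b hb i)
  -- the ratio lemma
  have hratio : ∀ a ∈ B, ∀ x ∈ dball B lam a (S a / c), S a / 4 ≤ S x := by
    intro a ha x hx
    have hxB : x ∈ B := hsub a ha x hx
    obtain ⟨b, hb, hbe⟩ := hx
    have hSa := hSpos a ha
    have hadm_u : Adm a (S a / 2) :=
      hSadm a ha _ (by positivity) (div_lt_self hSa (by norm_num))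
    have hAdmx : Adm x (S a / 4) := by
      refine ⟨by positivity, fun z hz => ?_⟩
      have hxz : x + z = a + (dil lam (S a / c) b + z) := by
        rw [← hbe]; exact add_assoc _ _ _
      rw [hxz]
      apply hadm_u.2
      intro i
      have hsl : (0:ℝ) < (S a / c) ^ lam i := Real.rpow_pos_of_pos (by positivity) _
      have hstu : (S a / c) ^ lam i + (S a / 4) ^ lam i ≤ (S a / 2) ^ lam i := by
        have e1 : (S a / c) ^ lam i = S a ^ lam i * (1/c : ℝ) ^ lam i := by
          rw [div_eq_mul_one_div, Real.mul_rpow hSa.le (by positivity)]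
        have e2 : (S a / 4) ^ lam i = S a ^ lam i * (1/4 : ℝ) ^ lam i := by
          rw [div_eq_mul_one_div, Real.mul_rpow hSa.le (by positivity)]
        have e3 : (S a / 2) ^ lam i = S a ^ lam i * (1/2 : ℝ) ^ lam i := by
          rw [div_eq_mul_one_div, Real.mul_rpow hSa.le (by positivity)]
        rw [e1, e2, e3, ← mul_add]
        exact mul_le_mul_of_nonneg_left (hkey i) (Real.rpow_pos_of_pos hSa _).le
      calc |(dil lam (S a / c) b + z) i| ≤ |dil lam (S a / c) b i| + |z i| := by
            rw [Pi.add_apply]; exact abs_add_le _ _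
        _ < (S a / c) ^ lam i * M + (S a / 4) ^ lam i * M := by
            refine add_lt_add_of_le_of_lt ?_ (hz i)
            rw [show dil lam (S a / c) b i = (S a / c) ^ lam i * b i from rfl, abs_mul,
              abs_of_pos hsl]
            exact mul_le_mul_of_nonneg_left (hBM b hb i).le hsl.le
        _ ≤ (S a / 2) ^ lam i * M := by nlinarith
    exact le_csSup (hbdd x hxB) hAdmx
  -- assemble
  refine ⟨fun a => S a / c, ?_, fun a ha => div_pos (hSpos a ha) hcpos, fun a ha => ⟨hsub a ha, ?_⟩⟩
  · -- lower semicontinuity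
    intro a ha y hy
    rcases le_or_gt y 0 with h0 | h0
    · filter_upwards [self_mem_nhdsWithin] with x hx
      exact lt_of_le_of_lt h0 (div_pos (hSpos x hx) hcpos)
    · have hSa := hSpos a ha
      set y' := (y + S a / c) / 2 with hy'
      have hy'gt : y < y' := by simp only [hy']; linarith
      have hy'lt : y' < S a / c := by simp only [hy']; linarith
      have hy'pos : 0 < y' := by linarith
      set r := c * y' with hrdef
      have hrpos : 0 < r := by positivity
      have hrS : r < S a := by
        have := (mul_lt_mul_iff_right₀ hcpos).mpr hy'lt
        rwa [mul_div_cancel₀ _ (ne_of_gt hcpos)] at this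
      set r' := (r + S a) / 2 with hr'def
      have hrr' : r < r' := by simp only [hr'def]; linarith
      have hr'S : r' < S a := by simp only [hr'def]; linarith
      have hadm' : Adm a r' := hSadm a ha r' (by linarith) hr'S
      have hη : ∀ i, 0 < (r' ^ lam i - r ^ lam i) * M := fun i =>
        mul_pos (sub_pos.mpr (Real.rpow_lt_rpow hrpos.le hrr' (hlam i))) hMpos
      have hev : ∀ᶠ x in nhdsWithin a B, ∀ i, |x i - a i| < (r' ^ lam i - r ^ lam i) * M := by
        rw [Filter.eventually_all]
        intro i
        apply eventually_nhdsWithin_of_eventually_nhds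
        have hcont : Filter.Tendsto (fun x : Fin n → ℝ => |x i - a i|) (nhds a)
            (nhds |a i - a i|) :=
          (((continuous_apply i).sub continuous_const).abs).tendsto a
        have : |a i - a i| < (r' ^ lam i - r ^ lam i) * M := by
          rw [sub_self, abs_zero]; exact hη i
        exact hcont.eventually_lt_const this
      filter_upwards [hev, self_mem_nhdsWithin] with x hx hxB
      have hadm : Adm x r := by
        refine ⟨hrpos, fun z hz => ?_⟩
        have hxz : x + z = a + ((x - a) + z) := by abel
        rw [hxz]
        apply hadm'.2
        intro i
        calc |((x - a) + z) i| ≤ |x i - a i| + |z i| := by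
              rw [Pi.add_apply, Pi.sub_apply]; exact abs_add_le _ _
          _ < (r' ^ lam i - r ^ lam i) * M + r ^ lam i * M := add_lt_add (hx i) (hz i)
          _ = r' ^ lam i * M := by ring
      have hrSx : r ≤ S x := le_csSup (hbdd x hxB) hadm
      have : y' ≤ S x / c := by
        rw [le_div_iff₀ hcpos]
        calc y' * c = c * y' := mul_comm _ _
          _ ≤ S x := hrSx
      linarith
  · -- ratio bound
    intro x hx
    have hxB : x ∈ B := hsub a ha x hx
    have h4 := hratio a ha x hx
    have hSx := hSpos x hxB
    have hSa := hSpos a ha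
    have heq : S a / c / (S x / c) = S a / S x := by
      field_simp
    rw [heq, div_le_iff₀ hSx]
    linarith
end

section
/- For each c > 0 and ε > 0, the family of functions u_N(x,y) = N^{−1}(e^x sin(Ny) + e) on [0,1]² satisfies Du_N = e^{2x} ≥ 1 for all N, where Du = (∂²_{xy}u)² − (∂²_{xx}u)(∂²_{yy}u), yet for every c > 0 there exists N such that the superlevel set {(x,y) ∈ [0,1]² : |u_N(x,y)| ≥ c} is empty; in particular ‖u_N‖_{L^∞([0,1]²)} → 0 as N → ∞. -/
open Real Set Filter

/-- The family `u_N(x,y) = N⁻¹(eˣ sin(Ny) + e)`. -/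
noncomputable def uN (N : ℕ) (x y : ℝ) : ℝ :=
  (Real.exp x * Real.sin (N * y) + Real.exp 1) / N

lemma hderiv_x (N : ℕ) (y x : ℝ) :
    HasDerivAt (fun x' => uN N x' y) (Real.exp x * Real.sin (N * y) / N) x :=
  (((Real.hasDerivAt_exp x).mul_const _).add_const _).div_const N

lemma hderiv_sin (N : ℕ) (y : ℝ) :
    HasDerivAt (fun y' : ℝ => Real.sin (N * y')) (Real.cos (N * y) * N) y := by
  have h1 : HasDerivAt (fun y' : ℝ => (N : ℝ) * y') N y := by
    simpa using (hasDerivAt_id y).const_mul (N : ℝ)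
  exact (Real.hasDerivAt_sin _).comp y h1

lemma hderiv_cos (N : ℕ) (y : ℝ) :
    HasDerivAt (fun y' : ℝ => Real.cos (N * y')) (-Real.sin (N * y) * N) y := by
  have h1 : HasDerivAt (fun y' : ℝ => (N : ℝ) * y') N y := by
    simpa using (hasDerivAt_id y).const_mul (N : ℝ)
  exact (Real.hasDerivAt_cos _).comp y h1

lemma hderiv_y (N : ℕ) (x y : ℝ) :
    HasDerivAt (fun y' => uN N x y') (Real.exp x * (Real.cos (N * y) * N) / N) y :=
  ((((hderiv_sin N y).const_mul (Real.exp x))).add_const _).div_const N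

lemma dx_eq (N : ℕ) (y : ℝ) :
    deriv (fun x' => uN N x' y) = fun x => Real.exp x * Real.sin (N * y) / N :=
  funext fun x => (hderiv_x N y x).deriv

lemma dxx_eq (N : ℕ) (y x : ℝ) :
    deriv (deriv (fun x' => uN N x' y)) x = Real.exp x * Real.sin (N * y) / N := by
  rw [dx_eq]
  exact (((Real.hasDerivAt_exp x).mul_const _).div_const N).deriv

lemma dy_eq (N : ℕ) (x : ℝ) :
    deriv (fun y' => uN N x y') = fun y => Real.exp x * (Real.cos (N * y) * N) / N :=
  funext fun y => (hderiv_y N x y).deriv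

lemma dyy_eq (N : ℕ) (x y : ℝ) :
    deriv (deriv (fun y' => uN N x y')) y
      = Real.exp x * (-Real.sin (N * y) * N * N) / N := by
  rw [dy_eq]
  exact ((((hderiv_cos N y).mul_const (N : ℝ)).const_mul (Real.exp x)).div_const N).deriv

lemma dxy_eq (N : ℕ) (x y : ℝ) :
    deriv (fun y' => deriv (fun x' => uN N x' y') x) y
      = Real.exp x * (Real.cos (N * y) * N) / N := by
  have h : (fun y' => deriv (fun x' => uN N x' y') x)
      = fun y' => Real.exp x * Real.sin (N * y') / N :=
    funext fun y' => (hderiv_x N y' x).deriv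
  rw [h]
  exact (((hderiv_sin N y).const_mul (Real.exp x)).div_const N).deriv

lemma uN_bound (N : ℕ) (hN : 1 ≤ N) (x y : ℝ) (hx : x ≤ 1) :
    |uN N x y| ≤ 2 * Real.exp 1 / N := by
  have hNpos : (0 : ℝ) < N := by exact_mod_cast hN
  have h1 : |Real.exp x * Real.sin (N * y) + Real.exp 1| ≤ 2 * Real.exp 1 := by
    calc |Real.exp x * Real.sin (N * y) + Real.exp 1|
        ≤ |Real.exp x * Real.sin (N * y)| + |Real.exp 1| := abs_add_le _ _
      _ ≤ Real.exp 1 * 1 + Real.exp 1 := by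
          rw [abs_mul, abs_of_pos (Real.exp_pos x), abs_of_pos (Real.exp_pos 1)]
          have h2 : |Real.sin ((N:ℝ) * y)| ≤ 1 := Real.abs_sin_le_one _
          have h3 := Real.exp_le_exp.2 hx
          nlinarith [abs_nonneg (Real.sin (N*y)), Real.exp_pos x]
      _ = 2 * Real.exp 1 := by ring
  rw [uN, abs_div, abs_of_pos hNpos]
  gcongr

/-- `u_N` satisfies `Du_N = (∂²_{xy}u)² − (∂²_{xx}u)(∂²_{yy}u) = e^{2x} ≥ 1`
on `[0,1]²`, yet for every `c > 0` there is `N` with `{|u_N| ≥ c} ∩ [0,1]²` empty; in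
particular `‖u_N‖_{L^∞([0,1]²)} → 0`. -/
theorem stmt16 :
    (∀ N : ℕ, 1 ≤ N → ∀ x y : ℝ,
      (deriv (fun y' => deriv (fun x' => uN N x' y') x) y) ^ 2 -
        (deriv (deriv (fun x' => uN N x' y)) x) *
          (deriv (deriv (fun y' => uN N x y')) y) = Real.exp (2 * x) ∧
      (0 ≤ x → 1 ≤ Real.exp (2 * x))) ∧
    (∀ c > (0:ℝ), ∃ N : ℕ, 1 ≤ N ∧
      {q : ℝ × ℝ | q ∈ Set.Icc ((0:ℝ), (0:ℝ)) (1, 1) ∧ c ≤ |uN N q.1 q.2|} = ∅) ∧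
    Tendsto (fun N : ℕ => ⨆ q ∈ Set.Icc ((0:ℝ), (0:ℝ)) (1, 1), |uN N q.1 q.2|)
      atTop (nhds 0) := by
  refine ⟨?_, ?_, ?_⟩
  · intro N hN x y
    have hNne : (N : ℝ) ≠ 0 := by positivity
    constructor
    · rw [dxy_eq, dxx_eq, dyy_eq, two_mul, Real.exp_add]
      have hs := Real.sin_sq_add_cos_sq (N * y)
      field_simp
      linear_combination hs
    · intro hx
      calc (1 : ℝ) = Real.exp 0 := (Real.exp_zero).symm
        _ ≤ Real.exp (2 * x) := Real.exp_le_exp.2 (by linarith)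
  · intro c hc
    obtain ⟨M, hM⟩ := exists_nat_gt (2 * Real.exp 1 / c)
    refine ⟨M + 1, Nat.le_add_left 1 M, ?_⟩
    ext q
    simp only [Set.mem_setOf_eq, Set.mem_empty_iff_false, iff_false, not_and, not_le]
    rintro ⟨⟨hx0, hy0⟩, hx1, hy1⟩
    have hN1 : 1 ≤ M + 1 := Nat.le_add_left 1 M
    have hb := uN_bound (M + 1) hN1 q.1 q.2 hx1
    have hlt : 2 * Real.exp 1 / (M + 1 : ℕ) < c := by
      rw [div_lt_iff₀ (by positivity)]
      have h2 : 2 * Real.exp 1 < c * M + c := by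
        have := (div_lt_iff₀ hc).mp hM
        nlinarith
      push_cast
      nlinarith
    exact hb.trans_lt hlt
  · have hle : ∀ N : ℕ, 1 ≤ N →
        (⨆ q ∈ Set.Icc ((0:ℝ), (0:ℝ)) (1, 1), |uN N q.1 q.2|) ≤ 2 * Real.exp 1 / N := by
      intro N hN
      refine Real.iSup_le (fun q => Real.iSup_le (fun hq => ?_) (by positivity)) (by positivity)
      exact uN_bound N hN q.1 q.2 hq.2.1
    have hge : ∀ N : ℕ,
        (0:ℝ) ≤ ⨆ q ∈ Set.Icc ((0:ℝ), (0:ℝ)) (1, 1), |uN N q.1 q.2| := by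
      intro N
      exact Real.iSup_nonneg fun q => Real.iSup_nonneg fun _ => abs_nonneg _
    refine tendsto_of_tendsto_of_tendsto_of_le_of_le' tendsto_const_nhds
      (tendsto_const_div_atTop_nhds_zero_nat (2 * Real.exp 1)) ?_ ?_
    · exact Eventually.of_forall hge
    · filter_upwards [eventually_ge_atTop 1] with N hN using hle N hN
end

section
/- Let Ω ⊆ ℝⁿ be bounded with positive measure, and let u : Ω → ℝ satisfy the uniform sublevel set estimate |{x ∈ Ω : |u(x)| ≤ ε}| ≤ C ε^δ for all ε > 0, for some C, δ > 0. Then for every p with −δ < p < 0, the normalised mean ‖u‖_p = ((1/|Ω|)∫_Ω |u|^p)^{1/p} satisfies ‖u‖_p ≥ ( 2^{−p+k₀(δ+p)} C / ((1 − 2^{−δ−p})|Ω|) + 2^{k₀ p} )^{1/p}, where k₀ is the smallest integer k with 2^{kδ} C ≥ |Ω|; in particular ‖u‖_p is bounded below by a positive constant depending only on C, δ, |Ω|, and p. -/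
open MeasureTheory Set ENNReal

private lemma ennreal_rpow_anti {x y : ℝ≥0∞} {c : ℝ} (hc : c ≤ 0) (h : x ≤ y) :
    y ^ c ≤ x ^ c := by
  have h1 : y⁻¹ ≤ x⁻¹ := ENNReal.inv_le_inv.mpr h
  have h2 := ENNReal.rpow_le_rpow h1 (neg_nonneg.mpr hc)
  rwa [ENNReal.inv_rpow, ENNReal.inv_rpow, ENNReal.rpow_neg, ENNReal.rpow_neg,
    inv_inv, inv_inv] at h2

set_option maxHeartbeats 1000000 in
/-- a uniform sublevel set estimate `|{|u| ≤ ε}| ≤ C ε^δ` implies, for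
`−δ < p < 0`, the lower bound
`‖u‖_p ≥ (2^{−p+k₀(δ+p)} C/((1−2^{−δ−p})|Ω|) + 2^{k₀p})^{1/p}` on the normalised
`L^p` mean, where `k₀` is the smallest integer `k` with `2^{kδ} C ≥ |Ω|`. -/
theorem stmt18 (n : ℕ) (Ω : Set (EuclideanSpace ℝ (Fin n)))
    (hΩm : MeasurableSet Ω) (hΩbdd : Bornology.IsBounded Ω) (hΩpos : 0 < volume Ω)
    (C δ : ℝ) (hC : 0 < C) (hδ : 0 < δ)
    (u : EuclideanSpace ℝ (Fin n) → ℝ) (hu : Measurable u)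
    (hsub : ∀ ε > (0:ℝ), volume {x ∈ Ω | |u x| ≤ ε} ≤ ENNReal.ofReal (C * ε ^ δ))
    (p : ℝ) (hp1 : -δ < p) (hp2 : p < 0)
    (k₀ : ℤ) (hk₀ : (volume Ω).toReal ≤ 2 ^ ((k₀ : ℝ) * δ) * C)
    (hk₀min : ∀ k : ℤ, k < k₀ → 2 ^ ((k : ℝ) * δ) * C < (volume Ω).toReal) :
    ENNReal.ofReal ((2 ^ (-p + (k₀ : ℝ) * (δ + p)) * C /
        ((1 - 2 ^ (-δ - p)) * (volume Ω).toReal) + 2 ^ ((k₀ : ℝ) * p)) ^ (1 / p)) ≤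
      ((volume Ω)⁻¹ * ∫⁻ x in Ω, (ENNReal.ofReal |u x|) ^ p) ^ (1 / p) := by
  classical
  set M : ℝ≥0∞ := volume Ω with hMdef
  have hMfin : M ≠ ∞ := hΩbdd.measure_lt_top.ne
  have hM0 : M ≠ 0 := hΩpos.ne'
  have hMt : 0 < M.toReal := ENNReal.toReal_pos hM0 hMfin
  have hδp : 0 < δ + p := by linarith
  have h2pos : (0:ℝ) < 2 := two_pos
  set r : ℝ := 2 ^ (-δ - p) with hrdef
  have hr0 : 0 ≤ r := (Real.rpow_pos_of_pos h2pos _).le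
  have hr1 : r < 1 := Real.rpow_lt_one_of_one_lt_of_neg one_lt_two (by linarith)
  have h1r : 0 < 1 - r := by linarith
  set B : ℝ := 2 ^ (-p + (k₀ : ℝ) * (δ + p)) with hBdef
  have hB : 0 < B := Real.rpow_pos_of_pos h2pos _
  set f : EuclideanSpace ℝ (Fin n) → ℝ≥0∞ := fun x => (ENNReal.ofReal |u x|) ^ p with hfdef
  -- dyadic levels
  set a : ℕ → ℝ := fun j => (2:ℝ) ^ ((k₀ : ℝ) - j) with hadef
  have ha_pos : ∀ j, 0 < a j := fun j => Real.rpow_pos_of_pos h2pos _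
  have hpow : ∀ j : ℕ, (a j) ^ p = 2 ^ (((k₀:ℝ) - j) * p) :=
    fun j => (Real.rpow_mul h2pos.le _ _).symm
  have hpowδ : ∀ j : ℕ, (a j) ^ δ = 2 ^ (((k₀:ℝ) - j) * δ) :=
    fun j => (Real.rpow_mul h2pos.le _ _).symm
  -- decomposition sets
  set Z : Set (EuclideanSpace ℝ (Fin n)) := Ω ∩ {x | u x = 0} with hZdef
  set F : Set (EuclideanSpace ℝ (Fin n)) := Ω ∩ {x | a 0 < |u x|} with hFdef
  set E : ℕ → Set (EuclideanSpace ℝ (Fin n)) :=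
    fun j => Ω ∩ ({x | a (j+1) < |u x|} ∩ {x | |u x| ≤ a j}) with hEdef
  have hFm : MeasurableSet F := hΩm.inter (measurableSet_lt measurable_const hu.abs)
  have hEm : ∀ j, MeasurableSet (E j) := fun j =>
    hΩm.inter ((measurableSet_lt measurable_const hu.abs).inter
      (measurableSet_le hu.abs measurable_const))
  -- the zero set is null
  have hS0 : volume Z = 0 := by
    by_contra hne
    set v : ℝ≥0∞ := volume Z with hvdef
    have hvfin : v ≠ ∞ := ne_top_of_le_ne_top hMfin (measure_mono inter_subset_left)
    have hvt : 0 < v.toReal := ENNReal.toReal_pos hne hvfin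
    set ε : ℝ := (v.toReal / (2 * C)) ^ (1 / δ) with hεdef
    have hε : 0 < ε := Real.rpow_pos_of_pos (by positivity) _
    have hkey : v ≤ ENNReal.ofReal (C * ε ^ δ) := by
      refine le_trans (measure_mono ?_) (hsub ε hε)
      intro x hx
      refine ⟨hx.1, ?_⟩
      have : u x = 0 := hx.2
      simp only [mem_setOf_eq, this, abs_zero]
      exact hε.le
    have hεδ : ε ^ δ = v.toReal / (2 * C) := by
      rw [hεdef, ← Real.rpow_mul (by positivity), one_div_mul_cancel hδ.ne', Real.rpow_one]
    have hCε : C * ε ^ δ = v.toReal / 2 := by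
      rw [hεδ]; field_simp
    have hlt : ENNReal.ofReal (C * ε ^ δ) < v := by
      rw [hCε]
      calc ENNReal.ofReal (v.toReal / 2) < ENNReal.ofReal v.toReal :=
            (ENNReal.ofReal_lt_ofReal_iff hvt).mpr (by linarith)
        _ = v := ENNReal.ofReal_toReal hvfin
    exact absurd hkey (not_le.mpr hlt)
  -- covering
  have hcover : Ω ⊆ (Z ∪ F) ∪ ⋃ j, E j := by
    intro x hx
    rcases eq_or_ne (u x) 0 with h0 | h0
    · exact Or.inl (Or.inl ⟨hx, h0⟩)
    by_cases hbig : a 0 < |u x|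
    · exact Or.inl (Or.inr ⟨hx, hbig⟩)
    push_neg at hbig
    have hx0 : 0 < |u x| := abs_pos.mpr h0
    set k : ℤ := ⌈Real.logb 2 |u x|⌉ with hkdef
    have hlogle : Real.logb 2 |u x| ≤ (k₀ : ℝ) := by
      rw [Real.logb_le_iff_le_rpow one_lt_two hx0]
      have : a 0 = (2:ℝ) ^ ((k₀:ℝ)) := by simp [hadef]
      linarith [hbig, this ▸ hbig]
    have hkk₀ : k ≤ k₀ := Int.ceil_le.mpr (by exact_mod_cast hlogle)
    have hub : |u x| ≤ 2 ^ ((k:ℝ)) := by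
      calc |u x| = 2 ^ Real.logb 2 |u x| := (Real.rpow_logb h2pos (by norm_num) hx0).symm
        _ ≤ 2 ^ ((k:ℝ)) := Real.rpow_le_rpow_of_exponent_le one_le_two (Int.le_ceil _)
    have hlb : 2 ^ ((k:ℝ) - 1) < |u x| := by
      have h1 : (k:ℝ) - 1 < Real.logb 2 |u x| := by
        have := Int.ceil_lt_add_one (Real.logb 2 |u x|)
        rw [← hkdef] at this
        linarith
      calc (2:ℝ) ^ ((k:ℝ) - 1) < 2 ^ Real.logb 2 |u x| :=
            Real.rpow_lt_rpow_of_exponent_lt one_lt_two h1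
        _ = |u x| := Real.rpow_logb h2pos (by norm_num) hx0
    set j : ℕ := (k₀ - k).toNat with hjdef
    have hje : (j : ℝ) = (k₀ : ℝ) - (k : ℝ) := by
      have h := Int.toNat_of_nonneg (sub_nonneg.mpr hkk₀)
      have h2 : ((j : ℤ) : ℝ) = ((k₀ - k : ℤ) : ℝ) := by rw [hjdef, h]
      push_cast at h2
      exact_mod_cast h2
    have ea1 : a (j + 1) = 2 ^ ((k:ℝ) - 1) := by
      simp only [hadef]
      congr 1
      push_cast
      rw [hje]; ring
    have ea0 : a j = 2 ^ ((k:ℝ)) := by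
      simp only [hadef]
      congr 1
      rw [hje]; ring
    exact Or.inr (mem_iUnion.mpr ⟨j, hx, by rw [ea1]; exact hlb, by rw [ea0]; exact hub⟩)
  -- bound on S 1
  have hg1 : ∫⁻ x in F, f x ≤ ENNReal.ofReal (2 ^ ((k₀:ℝ) * p)) * M := by
    have hpow0 : (a 0) ^ p = 2 ^ ((k₀:ℝ) * p) := by
      rw [hpow 0]; norm_num
    have hb : ∀ x ∈ F, f x ≤ ENNReal.ofReal (2 ^ ((k₀:ℝ) * p)) := by
      intro x hx
      have h1 : a 0 < |u x| := hx.2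
      have h2 := ennreal_rpow_anti hp2.le (ENNReal.ofReal_le_ofReal h1.le)
      rwa [ENNReal.ofReal_rpow_of_pos (ha_pos 0), hpow0] at h2
    calc ∫⁻ x in F, f x ≤ ∫⁻ _ in F, ENNReal.ofReal (2 ^ ((k₀:ℝ) * p)) :=
          setLIntegral_mono' hFm hb
      _ = ENNReal.ofReal (2 ^ ((k₀:ℝ) * p)) * volume F := setLIntegral_const _ _
      _ ≤ _ := mul_le_mul_right (measure_mono inter_subset_left) _
  -- exponent identity
  have hkey : ∀ j : ℕ, (a (j+1)) ^ p * (C * (a j) ^ δ) = C * B * r ^ j := by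
    intro j
    rw [hpow (j+1), hpowδ j, hBdef, hrdef, ← Real.rpow_natCast ((2:ℝ) ^ (-δ - p)) j,
      ← Real.rpow_mul h2pos.le]
    rw [show C * 2 ^ (-p + (k₀:ℝ) * (δ + p)) * 2 ^ ((-δ - p) * (j:ℝ)) =
        C * (2 ^ (-p + (k₀:ℝ) * (δ + p)) * 2 ^ ((-δ - p) * (j:ℝ))) from by ring,
      ← Real.rpow_add h2pos]
    rw [show (2:ℝ) ^ (((k₀:ℝ) - ((j:ℕ)+1:ℕ)) * p) * (C * 2 ^ (((k₀:ℝ) - j) * δ)) =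
        C * (2 ^ (((k₀:ℝ) - ((j:ℕ)+1:ℕ)) * p) * 2 ^ (((k₀:ℝ) - j) * δ)) from by ring,
      ← Real.rpow_add h2pos]
    congr 2
    push_cast
    ring
  -- bound on S (j+2)
  have hg2 : ∀ j : ℕ, ∫⁻ x in E j, f x ≤ ENNReal.ofReal (C * B * r ^ j) := by
    intro j
    have hmeas : volume (E j) ≤ ENNReal.ofReal (C * (a j) ^ δ) := by
      refine le_trans (measure_mono ?_) (hsub (a j) (ha_pos j))
      exact fun x hx => ⟨hx.1, hx.2.2⟩
    have hb : ∀ x ∈ E j, f x ≤ ENNReal.ofReal ((a (j+1)) ^ p) := by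
      intro x hx
      have h2 := ennreal_rpow_anti hp2.le (ENNReal.ofReal_le_ofReal hx.2.1.le)
      rwa [ENNReal.ofReal_rpow_of_pos (ha_pos (j+1))] at h2
    calc ∫⁻ x in E j, f x ≤ ∫⁻ _ in E j, ENNReal.ofReal ((a (j+1)) ^ p) :=
          setLIntegral_mono' (hEm j) hb
      _ = ENNReal.ofReal ((a (j+1)) ^ p) * volume (E j) := setLIntegral_const _ _
      _ ≤ ENNReal.ofReal ((a (j+1)) ^ p) * ENNReal.ofReal (C * (a j) ^ δ) :=
          mul_le_mul_right hmeas _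
      _ = ENNReal.ofReal ((a (j+1)) ^ p * (C * (a j) ^ δ)) :=
          (ENNReal.ofReal_mul (by positivity)).symm
      _ = ENNReal.ofReal (C * B * r ^ j) := by rw [hkey j]
  -- main integral bound
  have hmain : ∫⁻ x in Ω, f x ≤
      ENNReal.ofReal (2 ^ ((k₀:ℝ) * p)) * M + ENNReal.ofReal (C * B * (1 - r)⁻¹) := by
    have h1 : ∫⁻ x in Ω, f x ≤
        ((∫⁻ x in Z, f x) + ∫⁻ x in F, f x) + ∑' j, ∫⁻ x in E j, f x :=
      calc ∫⁻ x in Ω, f x ≤ ∫⁻ x in (Z ∪ F) ∪ ⋃ j, E j, f x := lintegral_mono_set hcover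
        _ ≤ (∫⁻ x in Z ∪ F, f x) + ∫⁻ x in ⋃ j, E j, f x := lintegral_union_le _ _ _
        _ ≤ ((∫⁻ x in Z, f x) + ∫⁻ x in F, f x) + ∑' j, ∫⁻ x in E j, f x :=
            add_le_add (lintegral_union_le _ _ _) (lintegral_iUnion_le _ _)
    have h3 : ∑' j, ∫⁻ x in E j, f x ≤ ENNReal.ofReal (C * B * (1 - r)⁻¹) := by
      calc ∑' j, ∫⁻ x in E j, f x ≤ ∑' j, ENNReal.ofReal (C * B * r ^ j) :=
            ENNReal.tsum_le_tsum (fun j => hg2 j)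
        _ = ENNReal.ofReal (∑' j : ℕ, C * B * r ^ j) :=
            (ENNReal.ofReal_tsum_of_nonneg (fun j => by positivity)
              ((summable_geometric_of_lt_one hr0 hr1).mul_left _)).symm
        _ = ENNReal.ofReal (C * B * (1 - r)⁻¹) := by
            rw [tsum_mul_left, tsum_geometric_of_lt_one hr0 hr1]
    have h0 : ∫⁻ x in Z, f x = 0 := setLIntegral_measure_zero _ _ hS0
    calc ∫⁻ x in Ω, f x ≤ ((∫⁻ x in Z, f x) + ∫⁻ x in F, f x)
          + ∑' j, ∫⁻ x in E j, f x := h1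
      _ = (∫⁻ x in F, f x) + ∑' j, ∫⁻ x in E j, f x := by rw [h0, zero_add]
      _ ≤ _ := add_le_add hg1 h3
  -- divide by |Ω|
  have hMinv : M⁻¹ = ENNReal.ofReal (M.toReal)⁻¹ := by
    rw [ENNReal.ofReal_inv_of_pos hMt, ENNReal.ofReal_toReal hMfin]
  have hle : M⁻¹ * ∫⁻ x in Ω, f x ≤
      ENNReal.ofReal (B * C / ((1 - r) * M.toReal) + 2 ^ ((k₀:ℝ) * p)) := by
    have hTnn : (0:ℝ) ≤ (M.toReal)⁻¹ * (C * B * (1 - r)⁻¹) :=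
      mul_nonneg (inv_nonneg.2 hMt.le)
        (mul_nonneg (mul_nonneg hC.le hB.le) (inv_nonneg.2 h1r.le))
    calc M⁻¹ * ∫⁻ x in Ω, f x
        ≤ M⁻¹ * (ENNReal.ofReal (2 ^ ((k₀:ℝ) * p)) * M + ENNReal.ofReal (C * B * (1 - r)⁻¹)) :=
          mul_le_mul_right hmain _
      _ = ENNReal.ofReal (2 ^ ((k₀:ℝ) * p)) + M⁻¹ * ENNReal.ofReal (C * B * (1 - r)⁻¹) := by
          rw [mul_add]
          congr 1
          rw [mul_comm (ENNReal.ofReal _) M, ← mul_assoc, ENNReal.inv_mul_cancel hM0 hMfin,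
            one_mul]
      _ = ENNReal.ofReal (2 ^ ((k₀:ℝ) * p)) +
          ENNReal.ofReal ((M.toReal)⁻¹ * (C * B * (1 - r)⁻¹)) := by
          rw [hMinv, ← ENNReal.ofReal_mul (inv_nonneg.2 hMt.le)]
      _ = ENNReal.ofReal (B * C / ((1 - r) * M.toReal) + 2 ^ ((k₀:ℝ) * p)) := by
          rw [← ENNReal.ofReal_add (Real.rpow_nonneg h2pos.le _) hTnn]
          congr 1
          rw [div_eq_mul_inv, mul_inv]
          ring
  have hA : 0 < B * C / ((1 - r) * M.toReal) + 2 ^ ((k₀:ℝ) * p) :=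
    add_pos_of_nonneg_of_pos
      (div_nonneg (mul_nonneg hB.le hC.le) (mul_pos h1r hMt).le)
      (Real.rpow_pos_of_pos h2pos _)
  calc ENNReal.ofReal ((B * C / ((1 - r) * M.toReal) + 2 ^ ((k₀:ℝ) * p)) ^ (1 / p))
      = (ENNReal.ofReal (B * C / ((1 - r) * M.toReal) + 2 ^ ((k₀:ℝ) * p))) ^ (1 / p) :=
        (ENNReal.ofReal_rpow_of_pos hA).symm
    _ ≤ (M⁻¹ * ∫⁻ x in Ω, f x) ^ (1 / p) :=
        ennreal_rpow_anti (one_div_nonpos.mpr hp2.le) hle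
end
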